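/- arXiv:1708.02088 — 6 statements merged into one kernel-verified Lean document; each statement's English description precedes it below -/
import Mathlib

section
/- Let G be a group and X₀ ⊆ G a subset such that the natural homomorphism A(CG(X₀)) → ⟨X₀⟩ is an isomorphism. Let u ∈ X₀ and set X₁ = (X₀ ∪ X₀^u) △ {u, u^{-2}}, where X₀^u = {x^u : x ∈ X₀} and △ denotes symmetric difference. Then the commutation graph CG(X₁) is isomorphic to the double of CG(X₀) along the star of u. -/
open scoped commutatorElement

/-- The set of commutator relations of a right-angled Artin group on a graph. -/
def raagRels {α : Type*} (Γ : SimpleGraph α) : Set (FreeGroup α) :=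
  {r | ∃ u v : α, Γ.Adj u v ∧ r = ⁅FreeGroup.of u, FreeGroup.of v⁆}

/-- The right-angled Artin group on the graph `Γ`. -/
def Raag {α : Type*} (Γ : SimpleGraph α) : Type _ := PresentedGroup (raagRels Γ)

instance {α : Type*} (Γ : SimpleGraph α) : Group (Raag Γ) :=
  inferInstanceAs (Group (PresentedGroup (raagRels Γ)))

/-- The standard generator of `Raag Γ` corresponding to a vertex. -/
def Raag.of {α : Type*} (Γ : SimpleGraph α) (v : α) : Raag Γ := PresentedGroup.of v

/-- The commutation graph of a subset `X` of a group `G`. -/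
def commGraph (G : Type*) [Group G] (X : Set G) : SimpleGraph X where
  Adj x y := x ≠ y ∧ Commute x.1 y.1
  symm := ⟨fun _ _ ⟨h1, h2⟩ => ⟨h1.symm, h2.symm⟩⟩
  loopless := ⟨fun _ ⟨h1, _⟩ => h1 rfl⟩

/-- The natural homomorphism `A(CG(X)) → G` extending the identity on `X`. -/
def natHom (G : Type*) [Group G] (X : Set G) : Raag (commGraph G X) →* G :=
  PresentedGroup.toGroup (f := Subtype.val) (by
    rintro r ⟨u, v, hadj, rfl⟩
    rw [map_commutatorElement]
    simp only [FreeGroup.lift_apply_of]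
    exact commutatorElement_eq_one_iff_commute.mpr hadj.2)

/-- The star of a vertex: vertices equal or adjacent to `v`. -/
def starSet {α : Type*} (Γ : SimpleGraph α) (v : α) : Set α := {w | w = v ∨ Γ.Adj v w}

/-- The link of a vertex: vertices adjacent to `v`. -/
def linkSet {α : Type*} (Γ : SimpleGraph α) (v : α) : Set α := {w | Γ.Adj v w}

/-- The double of a graph `X` along the star of a vertex `v`:
two copies of the complement of the star, glued along the star. -/
def doubleStar {α : Type*} (X : SimpleGraph α) (v : α) :
    SimpleGraph ((Fin 2 × {w : α // w ∉ starSet X v}) ⊕ {w : α // w ∈ starSet X v}) where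
  Adj a b :=
    match a, b with
    | .inl (i, x), .inl (j, y) => i = j ∧ X.Adj x.1 y.1
    | .inl (_, x), .inr y => X.Adj x.1 y.1
    | .inr x, .inl (_, y) => X.Adj x.1 y.1
    | .inr x, .inr y => X.Adj x.1 y.1
  symm := by
    constructor
    rintro (⟨i, x⟩ | x) (⟨j, y⟩ | y) h
    · exact ⟨h.1.symm, h.2.symm⟩
    · exact h.symm
    · exact h.symm
    · exact h.symm
  loopless := by
    constructor
    rintro (⟨i, x⟩ | x) h
    · exact X.loopless.irrefl _ h.2
    · exact X.loopless.irrefl _ h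

/-- The group element represented by a word (a list of letters with signs). -/
def wprod {α : Type*} (Γ : SimpleGraph α) (l : List (α × Bool)) : Raag Γ :=
  (l.map fun p => if p.2 then Raag.of Γ p.1 else (Raag.of Γ p.1)⁻¹).prod

/-- The word length of an element of `Raag Γ` with respect to the vertex generators. -/
noncomputable def wordLength {α : Type*} (Γ : SimpleGraph α) (w : Raag Γ) : ℕ :=
  sInf {n | ∃ l : List (α × Bool), l.length = n ∧ wprod Γ l = w}

/-- A word is reduced if its length realizes the word length of the element it represents. -/
def WordReduced {α : Type*} (Γ : SimpleGraph α) (l : List (α × Bool)) : Prop :=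
  l.length = wordLength Γ (wprod Γ l)

/-- The right-counting vector of a word: `rcv Γ l i` is the minimal word length of `y`
such that the suffix of `l` from position `i` equals `x * sᵢ^{eᵢ} * y` with `x` in the
subgroup generated by the link of `sᵢ`. -/
noncomputable def rcv {α : Type*} (Γ : SimpleGraph α) (l : List (α × Bool))
    (i : Fin l.length) : ℕ :=
  sInf {m | ∃ x y : Raag Γ,
    x ∈ Subgroup.closure (Raag.of Γ '' linkSet Γ (l.get i).1) ∧
    wordLength Γ y = m ∧
    wprod Γ (l.drop i) = x * wprod Γ [l.get i] * y}

/-- The exponent used by the inflating map `σ` at position `i` of the word `l`. -/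
noncomputable def sigmaExp {α : Type*} (Γ : SimpleGraph α) (M : ℕ) (l : List (α × Bool))
    (i : Fin l.length) : ℤ :=
  if (l.get i).2 then (4 : ℤ) ^ (M - 1 - rcv Γ l i)
  else -2 * (4 : ℤ) ^ (M - 1 - rcv Γ l i)

/-- The inflating map `σ` applied to a word `l`, as an element of `Raag Γ`. -/
noncomputable def sigmaProd {α : Type*} (Γ : SimpleGraph α) (M : ℕ)
    (l : List (α × Bool)) : Raag Γ :=
  (List.ofFn fun i : Fin l.length => (Raag.of Γ (l.get i).1) ^ (sigmaExp Γ M l i)).prod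

-- AUX
def cgdHom {α : Type*} {Γ : SimpleGraph α} {H : Type*} [Group H] (f : α → H)
    (h : ∀ a b, Γ.Adj a b → Commute (f a) (f b)) : Raag Γ →* H :=
  PresentedGroup.toGroup (f := f) (by
    rintro r ⟨a, b, hab, rfl⟩
    rw [map_commutatorElement]
    simp only [FreeGroup.lift_apply_of]
    exact commutatorElement_eq_one_iff_commute.mpr (h a b hab))

@[simp] lemma cgdHom_of {α : Type*} {Γ : SimpleGraph α} {H : Type*} [Group H] (f : α → H)
    (h : ∀ a b, Γ.Adj a b → Commute (f a) (f b)) (v : α) :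
    cgdHom f h (Raag.of Γ v) = f v := PresentedGroup.toGroup.of _

@[simp] lemma natHom_of {G : Type*} [Group G] (X : Set G) (v : X) :
    natHom G X (Raag.of (commGraph G X) v) = v.1 := PresentedGroup.toGroup.of _

noncomputable def cgdAbel {α : Type*} (Γ : SimpleGraph α) :
    Raag Γ →* Multiplicative (α →₀ ℤ) :=
  cgdHom (fun v => Multiplicative.ofAdd (Finsupp.single v 1)) (fun _ _ _ => Commute.all _ _)

section Main
variable {G : Type*} [Group G] {X₀ : Set G}

lemma cgd_conj_eq (hinj : Function.Injective (natHom G X₀)) {u : G} (hu : u ∈ X₀)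
    (x y : ↥X₀) (h : u⁻¹ * x.1 * u = y.1) : x = y := by
  have h1 : (Raag.of (commGraph G X₀) ⟨u, hu⟩)⁻¹ * Raag.of (commGraph G X₀) x *
      Raag.of (commGraph G X₀) ⟨u, hu⟩ = Raag.of (commGraph G X₀) y :=
    hinj (by simpa [mul_assoc] using h)
  have h2 := congrArg (fun z => Multiplicative.toAdd (cgdAbel (commGraph G X₀) z)) h1
  simp only [cgdAbel, map_mul, map_inv, cgdHom_of, toAdd_mul, toAdd_inv, toAdd_ofAdd] at h2
  have h3 : Finsupp.single x (1 : ℤ) = Finsupp.single y 1 := by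
    rw [← h2]; abel
  exact Finsupp.single_left_injective one_ne_zero h3

lemma cgd_ne_zpow (hinj : Function.Injective (natHom G X₀)) {u : G} (hu : u ∈ X₀)
    (x : ↥X₀) : x.1 ≠ u ^ (-2 : ℤ) := by
  intro h
  have h1 : Raag.of (commGraph G X₀) x = (Raag.of (commGraph G X₀) ⟨u, hu⟩) ^ (-2 : ℤ) :=
    hinj (by simpa [map_zpow] using h)
  have h2 := congrArg (fun z => Multiplicative.toAdd (cgdAbel (commGraph G X₀) z)) h1
  simp only [cgdAbel, map_zpow, cgdHom_of, toAdd_zpow, toAdd_ofAdd] at h2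
  have h3 := DFunLike.congr_fun h2 x
  rcases eq_or_ne (⟨u, hu⟩ : ↥X₀) x with he | he <;>
    simp [Finsupp.single_apply, he] at h3

lemma cgd_nc_sq (hinj : Function.Injective (natHom G X₀)) {u : G} (hu : u ∈ X₀)
    (x : ↥X₀) (hx : ¬Commute u x.1) : ¬Commute x.1 (u * u) := by
  classical
  intro hc
  set u' : ↥X₀ := ⟨u, hu⟩ with hu'
  have hxu : x ≠ u' := by
    rintro rfl; exact hx (Commute.refl _)
  set f : ↥X₀ → Equiv.Perm (Fin 5) :=
    fun v => if v = x then Equiv.swap 0 1 else if v = u' then finRotate 5 else 1 with hf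
  have fval : ∀ v, v ≠ x → v ≠ u' → f v = 1 := by
    intro v h1 h2; simp [hf, h1, h2]
  have compat : ∀ a b, (commGraph G X₀).Adj a b → Commute (f a) (f b) := by
    rintro a b ⟨hne, hcomm⟩
    by_cases hax : a = x
    · by_cases hbu : b = u'
      · exact absurd (by rw [hax, hbu] at hcomm; exact hcomm.symm) hx
      · by_cases hbx : b = x
        · exact absurd (hax.trans hbx.symm) hne
        · rw [fval b hbx hbu]; exact Commute.one_right _
    · by_cases hau : a = u'
      · by_cases hbx : b = x
        · exact absurd (by rw [hau, hbx] at hcomm; exact hcomm) hx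
        · by_cases hbu : b = u'
          · exact absurd (hau.trans hbu.symm) hne
          · rw [fval b hbx hbu]; exact Commute.one_right _
      · rw [fval a hax hau]; exact Commute.one_left _
  have h1 : Raag.of (commGraph G X₀) x *
        (Raag.of (commGraph G X₀) u' * Raag.of (commGraph G X₀) u') =
      (Raag.of (commGraph G X₀) u' * Raag.of (commGraph G X₀) u') *
        Raag.of (commGraph G X₀) x :=
    hinj (by simpa [mul_assoc] using hc.eq)
  have h2 := congrArg (cgdHom f compat) h1
  simp only [map_mul, cgdHom_of] at h2
  have hfx : f x = Equiv.swap 0 1 := by simp [hf]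
  have hfu : f u' = finRotate 5 := by
    simp only [hf]
    rw [if_neg (fun h => hxu h.symm)]
    simp
  rw [hfx, hfu] at h2
  exact absurd h2 (by decide)

lemma cgd_nc_conj (hinj : Function.Injective (natHom G X₀)) {u : G} (hu : u ∈ X₀)
    (x y : ↥X₀) (hx : ¬Commute u x.1) (hy : ¬Commute u y.1) :
    ¬Commute x.1 (u⁻¹ * y.1 * u) := by
  classical
  intro hc
  set u' : ↥X₀ := ⟨u, hu⟩ with hu'
  have hxu : x ≠ u' := by rintro rfl; exact hx (Commute.refl _)
  have hyu : y ≠ u' := by rintro rfl; exact hy (Commute.refl _)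
  set f : ↥X₀ → Equiv.Perm (Fin 5) :=
    fun v => if v = x ∨ v = y then Equiv.swap 0 1 else if v = u' then finRotate 5 else 1 with hf
  have fswap : ∀ v, v = x ∨ v = y → f v = Equiv.swap 0 1 := by
    intro v h1; simp [hf, h1]
  have fval : ∀ v, ¬(v = x ∨ v = y) → v ≠ u' → f v = 1 := by
    intro v h1 h2; simp only [hf]; rw [if_neg h1, if_neg h2]
  have compat : ∀ a b, (commGraph G X₀).Adj a b → Commute (f a) (f b) := by
    rintro a b ⟨hne, hcomm⟩
    by_cases ha : a = x ∨ a = y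
    · by_cases hb : b = x ∨ b = y
      · rw [fswap a ha, fswap b hb]
      · by_cases hbu : b = u'
        · exfalso
          rw [hbu] at hcomm
          rcases ha with h | h <;> rw [h] at hcomm
          · exact hx hcomm.symm
          · exact hy hcomm.symm
        · rw [fval b hb hbu]; exact Commute.one_right _
    · by_cases hau : a = u'
      · by_cases hb : b = x ∨ b = y
        · exfalso
          rw [hau] at hcomm
          rcases hb with h | h <;> rw [h] at hcomm
          · exact hx hcomm
          · exact hy hcomm
        · by_cases hbu : b = u'
          · exact absurd (hau.trans hbu.symm) hne
          · rw [fval b hb hbu]; exact Commute.one_right _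
      · rw [fval a ha hau]; exact Commute.one_left _
  have h1 : Raag.of (commGraph G X₀) x *
        ((Raag.of (commGraph G X₀) u')⁻¹ * Raag.of (commGraph G X₀) y *
          Raag.of (commGraph G X₀) u') =
      ((Raag.of (commGraph G X₀) u')⁻¹ * Raag.of (commGraph G X₀) y *
          Raag.of (commGraph G X₀) u') * Raag.of (commGraph G X₀) x :=
    hinj (by simpa [mul_assoc] using hc.eq)
  have h2 := congrArg (cgdHom f compat) h1
  simp only [map_mul, map_inv, cgdHom_of] at h2
  have hfx : f x = Equiv.swap 0 1 := by simp [hf]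
  have hfy : f y = Equiv.swap 0 1 := by simp [hf]
  have hfu : f u' = finRotate 5 := by
    simp only [hf]
    rw [if_neg (by push_neg; exact ⟨fun h => hxu h.symm, fun h => hyu h.symm⟩)]
    simp
  rw [hfx, hfy, hfu] at h2
  exact absurd h2 (by decide)

end Main

section Main2
variable {G : Type*} [Group G] {X₀ : Set G}

lemma cgd_star_iff {u : G} (hu : u ∈ X₀) (w : ↥X₀) :
    w ∈ starSet (commGraph G X₀) ⟨u, hu⟩ ↔ Commute u w.1 := by
  constructor
  · rintro (rfl | h)
    · exact Commute.refl u
    · exact h.2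
  · intro h
    rcases eq_or_ne w ⟨u, hu⟩ with rfl | hne
    · exact Or.inl rfl
    · exact Or.inr ⟨hne.symm, h⟩

abbrev cgdS (G : Type*) [Group G] (X₀ : Set G) (u : G) : Set G :=
  symmDiff (X₀ ∪ (fun x => u⁻¹ * x * u) '' X₀) {u, u ^ (-2 : ℤ)}

lemma cgd_memA (hinj : Function.Injective (natHom G X₀)) {u : G} (hu : u ∈ X₀)
    (x : ↥X₀) (hx : x.1 ≠ u) : x.1 ∈ cgdS G X₀ u := by
  rw [Set.mem_symmDiff]
  left
  refine ⟨Or.inl x.2, ?_⟩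
  simp only [Set.mem_insert_iff, Set.mem_singleton_iff, not_or]
  exact ⟨hx, cgd_ne_zpow hinj hu x⟩

lemma cgd_memB (hinj : Function.Injective (natHom G X₀)) {u : G} (hu : u ∈ X₀)
    (x : ↥X₀) (hx : ¬Commute u x.1) : u⁻¹ * x.1 * u ∈ cgdS G X₀ u := by
  rw [Set.mem_symmDiff]
  left
  refine ⟨Or.inr ⟨x.1, x.2, rfl⟩, ?_⟩
  simp only [Set.mem_insert_iff, Set.mem_singleton_iff, not_or]
  constructor
  · intro h
    apply hx
    have hxu : x.1 = u := by
      calc x.1 = u * (u⁻¹ * x.1 * u) * u⁻¹ := by group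
      _ = u * u * u⁻¹ := by rw [h]
      _ = u := by group
    rw [hxu]
  · intro h
    apply cgd_ne_zpow hinj hu x
    calc x.1 = u * (u⁻¹ * x.1 * u) * u⁻¹ := by group
    _ = u * u ^ (-2 : ℤ) * u⁻¹ := by rw [h]
    _ = u ^ (-2 : ℤ) := by group

lemma cgd_memC (hinj : Function.Injective (natHom G X₀)) {u : G} (hu : u ∈ X₀) :
    u ^ (-2 : ℤ) ∈ cgdS G X₀ u := by
  rw [Set.mem_symmDiff]
  right
  refine ⟨Or.inr rfl, ?_⟩
  rintro (h | ⟨y, hy, hy2⟩)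
  · exact cgd_ne_zpow hinj hu ⟨_, h⟩ rfl
  · apply cgd_ne_zpow hinj hu ⟨y, hy⟩
    show y = u ^ (-2 : ℤ)
    calc y = u * (u⁻¹ * y * u) * u⁻¹ := by group
    _ = u * u ^ (-2 : ℤ) * u⁻¹ := by rw [show u⁻¹ * y * u = u ^ (-2:ℤ) from hy2]
    _ = u ^ (-2 : ℤ) := by group

open Classical in
noncomputable def cgdF (hinj : Function.Injective (natHom G X₀)) {u : G} (hu : u ∈ X₀) :
    ((Fin 2 × {w : ↥X₀ // w ∉ starSet (commGraph G X₀) ⟨u, hu⟩}) ⊕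
      {w : ↥X₀ // w ∈ starSet (commGraph G X₀) ⟨u, hu⟩}) → ↥(cgdS G X₀ u)
  | .inl p =>
      if p.1 = 0 then
        ⟨p.2.1.1, cgd_memA hinj hu p.2.1 (fun h => p.2.2 ((cgd_star_iff hu p.2.1).2
          (by rw [h])))⟩
      else
        ⟨u⁻¹ * p.2.1.1 * u, cgd_memB hinj hu p.2.1
          (fun h => p.2.2 ((cgd_star_iff hu p.2.1).2 h))⟩
  | .inr w =>
      if h : w.1 = ⟨u, hu⟩ then ⟨u ^ (-2 : ℤ), cgd_memC hinj hu⟩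
      else ⟨w.1.1, cgd_memA hinj hu w.1 (fun he => h (Subtype.ext he))⟩

lemma cgdF_inl0 (hinj : Function.Injective (natHom G X₀)) {u : G} (hu : u ∈ X₀)
    {i : Fin 2} (hi : i = 0) (x) :
    (cgdF hinj hu (Sum.inl (i, x))).1 = x.1.1 := by
  simp only [cgdF]
  rw [if_pos hi]

lemma cgdF_inl1 (hinj : Function.Injective (natHom G X₀)) {u : G} (hu : u ∈ X₀)
    {i : Fin 2} (hi : i ≠ 0) (x) :
    (cgdF hinj hu (Sum.inl (i, x))).1 = u⁻¹ * x.1.1 * u := by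
  simp only [cgdF]
  rw [if_neg hi]

lemma cgdF_inrU (hinj : Function.Injective (natHom G X₀)) {u : G} (hu : u ∈ X₀)
    (w) (hw : w.1 = (⟨u, hu⟩ : ↥X₀)) :
    (cgdF hinj hu (Sum.inr w)).1 = u ^ (-2 : ℤ) := by
  simp only [cgdF]
  rw [dif_pos hw]

lemma cgdF_inr (hinj : Function.Injective (natHom G X₀)) {u : G} (hu : u ∈ X₀)
    (w) (hw : w.1 ≠ (⟨u, hu⟩ : ↥X₀)) :
    (cgdF hinj hu (Sum.inr w)).1 = w.1.1 := by
  simp only [cgdF]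
  rw [dif_neg hw]

end Main2

/-- if the natural map `A(CG(X₀)) → ⟨X₀⟩` is an isomorphism and
`X₁ = (X₀ ∪ X₀^u) △ {u, u⁻²}`, then `CG(X₁)` is the double of `CG(X₀)` along the
star of `u`. -/
theorem commGraph_double (G : Type*) [Group G] (X₀ : Set G)
    (hinj : Function.Injective (natHom G X₀))
    (hrange : (natHom G X₀).range = Subgroup.closure X₀)
    (u : G) (hu : u ∈ X₀) :
    Nonempty
      (commGraph G (symmDiff (X₀ ∪ (fun x => u⁻¹ * x * u) '' X₀) {u, u ^ (-2 : ℤ)}) ≃g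
        doubleStar (commGraph G X₀) ⟨u, hu⟩) := by
  classical
  have hstar := cgd_star_iff (X₀ := X₀) hu
  have hnc : ∀ x : {w : ↥X₀ // w ∉ starSet (commGraph G X₀) ⟨u, hu⟩}, ¬Commute u x.1.1 :=
    fun x h => x.2 ((hstar x.1).2 h)
  have hcw : ∀ w : {w : ↥X₀ // w ∈ starSet (commGraph G X₀) ⟨u, hu⟩}, Commute u w.1.1 :=
    fun w => (hstar w.1).1 w.2
  have hconjinj := cgd_conj_eq hinj hu
  have hne2 := cgd_ne_zpow hinj hu
  have hncj := cgd_nc_conj hinj hu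
  have key : ∀ z : G, u⁻¹ * z * u = z → Commute u z := by
    intro z hz
    show u * z = z * u
    conv_lhs => rw [← hz]
    group
  have hcfix : ∀ z : G, Commute u z → u⁻¹ * z * u = z := by
    intro z hzc
    calc u⁻¹ * z * u = u⁻¹ * (z * u) := by group
    _ = u⁻¹ * (u * z) := by rw [← hzc.eq]
    _ = z := by group
  have hccj : ∀ a b : G, Commute (u⁻¹ * a * u) (u⁻¹ * b * u) ↔ Commute a b := by
    intro a b
    have := Commute.conj_iff (a := a) (b := b) u⁻¹
    simpa [inv_inv] using this
  have hsq : ∀ x : ↥X₀, ¬Commute u x.1 → ¬Commute x.1 (u ^ (-2 : ℤ)) := by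
    intro x hx hc
    apply cgd_nc_sq hinj hu x hx
    have h1 := hc.inv_right
    rw [show (u ^ (-2 : ℤ))⁻¹ = u * u by group; exact zpow_two u] at h1
    exact h1
  have hAdjS : ∀ a b : ↥(cgdS G X₀ u),
      (commGraph G (cgdS G X₀ u)).Adj a b ↔ (a.1 ≠ b.1 ∧ Commute a.1 b.1) := by
    intro a b
    constructor
    · rintro ⟨h1, h2⟩; exact ⟨fun he => h1 (Subtype.ext he), h2⟩
    · rintro ⟨h1, h2⟩; exact ⟨fun he => h1 (congrArg Subtype.val he), h2⟩
  have hFinj : Function.Injective (cgdF hinj hu) := by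
    intro a b hab
    have h := congrArg Subtype.val hab
    rcases a with ⟨i, x⟩ | w <;> rcases b with ⟨j, y⟩ | w'
    · by_cases hi : i = 0 <;> by_cases hj : j = 0
      · rw [cgdF_inl0 hinj hu hi, cgdF_inl0 hinj hu hj] at h
        rw [hi, hj, Subtype.ext (Subtype.ext h)]
      · rw [cgdF_inl0 hinj hu hi, cgdF_inl1 hinj hu hj] at h
        exfalso
        have h2 := hconjinj y.1 x.1 h.symm
        rw [show (y.1 : ↥X₀).1 = x.1.1 from congrArg Subtype.val h2] at h
        exact hnc x (key x.1.1 h.symm)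
      · rw [cgdF_inl1 hinj hu hi, cgdF_inl0 hinj hu hj] at h
        exfalso
        have h2 := hconjinj x.1 y.1 h
        rw [show (x.1 : ↥X₀).1 = y.1.1 from congrArg Subtype.val h2] at h
        exact hnc y (key y.1.1 h)
      · rw [cgdF_inl1 hinj hu hi, cgdF_inl1 hinj hu hj] at h
        have h2 : x.1.1 = y.1.1 := mul_left_cancel (mul_right_cancel h)
        have hij : i = j := by omega
        rw [hij, Subtype.ext (Subtype.ext h2)]
    · by_cases hw : w'.1 = (⟨u, hu⟩ : ↥X₀)
      · rw [cgdF_inrU hinj hu w' hw] at h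
        by_cases hi : i = 0
        · rw [cgdF_inl0 hinj hu hi] at h
          exact absurd h (hne2 x.1)
        · rw [cgdF_inl1 hinj hu hi] at h
          exfalso
          apply hne2 x.1
          calc x.1.1 = u * (u⁻¹ * x.1.1 * u) * u⁻¹ := by group
          _ = u * u ^ (-2 : ℤ) * u⁻¹ := by rw [h]
          _ = u ^ (-2 : ℤ) := by group
      · rw [cgdF_inr hinj hu w' hw] at h
        exfalso
        by_cases hi : i = 0
        · rw [cgdF_inl0 hinj hu hi] at h
          exact x.2 (by rw [Subtype.ext h]; exact w'.2)
        · rw [cgdF_inl1 hinj hu hi] at h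
          have h2 := hconjinj x.1 w'.1 h
          exact x.2 (by rw [h2]; exact w'.2)
    · replace h := h.symm
      by_cases hw : w.1 = (⟨u, hu⟩ : ↥X₀)
      · rw [cgdF_inrU hinj hu w hw] at h
        by_cases hj : j = 0
        · rw [cgdF_inl0 hinj hu hj] at h
          exact absurd h (hne2 y.1)
        · rw [cgdF_inl1 hinj hu hj] at h
          exfalso
          apply hne2 y.1
          calc y.1.1 = u * (u⁻¹ * y.1.1 * u) * u⁻¹ := by group
          _ = u * u ^ (-2 : ℤ) * u⁻¹ := by rw [h]
          _ = u ^ (-2 : ℤ) := by group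
      · rw [cgdF_inr hinj hu w hw] at h
        exfalso
        by_cases hj : j = 0
        · rw [cgdF_inl0 hinj hu hj] at h
          exact y.2 (by rw [Subtype.ext h]; exact w.2)
        · rw [cgdF_inl1 hinj hu hj] at h
          have h2 := hconjinj y.1 w.1 h
          exact y.2 (by rw [h2]; exact w.2)
    · by_cases hw : w.1 = (⟨u, hu⟩ : ↥X₀) <;> by_cases hw' : w'.1 = (⟨u, hu⟩ : ↥X₀)
      · rw [Subtype.ext (hw.trans hw'.symm)]
      · rw [cgdF_inrU hinj hu w hw, cgdF_inr hinj hu w' hw'] at h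
        exact absurd h.symm (hne2 w'.1)
      · rw [cgdF_inr hinj hu w hw, cgdF_inrU hinj hu w' hw'] at h
        exact absurd h (hne2 w.1)
      · rw [cgdF_inr hinj hu w hw, cgdF_inr hinj hu w' hw'] at h
        rw [Subtype.ext (Subtype.ext h)]
  have hFsurj : Function.Surjective (cgdF hinj hu) := by
    intro z
    have hz := z.2
    rw [Set.mem_symmDiff] at hz
    rcases hz with ⟨hA, hB⟩ | ⟨hB, hA⟩
    · have hzu : z.1 ≠ u := fun h => hB (Or.inl h)
      rcases hA with hz0 | ⟨y, hy, hyz⟩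
      · by_cases hc : Commute u z.1
        · refine ⟨Sum.inr ⟨⟨z.1, hz0⟩, (hstar _).2 hc⟩, Subtype.ext ?_⟩
          rw [cgdF_inr hinj hu _ (fun he => hzu (congrArg Subtype.val he))]
        · refine ⟨Sum.inl (0, ⟨⟨z.1, hz0⟩, fun hs => hc ((hstar _).1 hs)⟩), Subtype.ext ?_⟩
          rw [cgdF_inl0 hinj hu rfl]
      · have hyz' : u⁻¹ * y * u = z.1 := hyz
        by_cases hc : Commute u y
        · have hyzv : y = z.1 := by rw [← hyz']; exact (hcfix y hc).symm
          have hz0 : z.1 ∈ X₀ := by rw [← hyzv]; exact hy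
          refine ⟨Sum.inr ⟨⟨z.1, hz0⟩, (hstar _).2 (by rw [← hyzv]; exact hc)⟩, Subtype.ext ?_⟩
          rw [cgdF_inr hinj hu _ (fun he => hzu (congrArg Subtype.val he))]
        · refine ⟨Sum.inl (1, ⟨⟨y, hy⟩, fun hs => hc ((hstar _).1 hs)⟩), Subtype.ext ?_⟩
          rw [cgdF_inl1 hinj hu (by decide)]
          exact hyz'
    · simp only [Set.mem_insert_iff, Set.mem_singleton_iff] at hB
      rcases hB with h | h
      · exact absurd (Or.inl (by rw [h]; exact hu)) hA
      · refine ⟨Sum.inr ⟨⟨u, hu⟩, (hstar _).2 (Commute.refl u)⟩, Subtype.ext ?_⟩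
        rw [cgdF_inrU hinj hu _ rfl]
        exact h.symm
  have hbij : Function.Bijective (cgdF hinj hu) := ⟨hFinj, hFsurj⟩
  refine ⟨SimpleGraph.Iso.symm ⟨Equiv.ofBijective (cgdF hinj hu) hbij, ?_⟩⟩
  intro a b
  simp only [Equiv.ofBijective_apply]
  rcases a with ⟨i, x⟩ | w <;> rcases b with ⟨j, y⟩ | w'
  · by_cases hi : i = 0 <;> by_cases hj : j = 0
    · rw [hAdjS, cgdF_inl0 hinj hu hi, cgdF_inl0 hinj hu hj]
      constructor
      · rintro ⟨h1, h2⟩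
        exact ⟨hi.trans hj.symm, fun he => h1 (congrArg Subtype.val he), h2⟩
      · rintro ⟨-, h1, h2⟩
        exact ⟨fun he => h1 (Subtype.ext he), h2⟩
    · rw [hAdjS, cgdF_inl0 hinj hu hi, cgdF_inl1 hinj hu hj]
      constructor
      · rintro ⟨-, h2⟩
        exact absurd h2 (hncj x.1 y.1 (hnc x) (hnc y))
      · rintro ⟨hij, -⟩
        exfalso; exact hj (by rw [← hij, hi])
    · rw [hAdjS, cgdF_inl1 hinj hu hi, cgdF_inl0 hinj hu hj]
      constructor
      · rintro ⟨-, h2⟩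
        exact absurd h2.symm (hncj y.1 x.1 (hnc y) (hnc x))
      · rintro ⟨hij, -⟩
        exfalso; exact hi (by rw [hij, hj])
    · rw [hAdjS, cgdF_inl1 hinj hu hi, cgdF_inl1 hinj hu hj]
      constructor
      · rintro ⟨h1, h2⟩
        refine ⟨by omega, ?_, (hccj _ _).1 h2⟩
        intro he
        exact h1 (by rw [congrArg Subtype.val he])
      · rintro ⟨-, h1, h2⟩
        refine ⟨?_, (hccj _ _).2 h2⟩
        intro he
        exact h1 (Subtype.ext (mul_left_cancel (mul_right_cancel he)))
  · by_cases hw : w'.1 = (⟨u, hu⟩ : ↥X₀) <;> by_cases hi : i = 0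
    · rw [hAdjS, cgdF_inl0 hinj hu hi, cgdF_inrU hinj hu w' hw]
      constructor
      · rintro ⟨-, h2⟩
        exact absurd h2 (hsq x.1 (hnc x))
      · rintro ⟨-, h2⟩
        exfalso; rw [hw] at h2; exact hnc x h2.symm
    · rw [hAdjS, cgdF_inl1 hinj hu hi, cgdF_inrU hinj hu w' hw]
      constructor
      · rintro ⟨-, h2⟩
        exfalso
        apply hsq x.1 (hnc x)
        rw [← hcfix (u ^ (-2 : ℤ)) ((Commute.refl u).zpow_right _)] at h2
        exact (hccj _ _).1 h2
      · rintro ⟨-, h2⟩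
        exfalso; rw [hw] at h2; exact hnc x h2.symm
    · rw [hAdjS, cgdF_inl0 hinj hu hi, cgdF_inr hinj hu w' hw]
      constructor
      · rintro ⟨h1, h2⟩; exact ⟨fun he => h1 (congrArg Subtype.val he), h2⟩
      · rintro ⟨h1, h2⟩; exact ⟨fun he => h1 (Subtype.ext he), h2⟩
    · rw [hAdjS, cgdF_inl1 hinj hu hi, cgdF_inr hinj hu w' hw]
      constructor
      · rintro ⟨-, h2⟩
        refine ⟨fun he => x.2 (by rw [he]; exact w'.2), ?_⟩
        rw [← hcfix w'.1.1 (hcw w')] at h2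
        exact (hccj _ _).1 h2
      · rintro ⟨-, h2⟩
        refine ⟨?_, ?_⟩
        · intro he
          exact x.2 (by rw [hconjinj x.1 w'.1 he]; exact w'.2)
        · rw [← hcfix w'.1.1 (hcw w')]
          exact (hccj _ _).2 h2
  · by_cases hw : w.1 = (⟨u, hu⟩ : ↥X₀) <;> by_cases hj : j = 0
    · rw [hAdjS, cgdF_inrU hinj hu w hw, cgdF_inl0 hinj hu hj]
      constructor
      · rintro ⟨-, h2⟩
        exact absurd h2.symm (hsq y.1 (hnc y))
      · rintro ⟨-, h2⟩
        exfalso; rw [hw] at h2; exact hnc y h2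
    · rw [hAdjS, cgdF_inrU hinj hu w hw, cgdF_inl1 hinj hu hj]
      constructor
      · rintro ⟨-, h2⟩
        exfalso
        apply hsq y.1 (hnc y)
        rw [← hcfix (u ^ (-2 : ℤ)) ((Commute.refl u).zpow_right _)] at h2
        exact (hccj _ _).1 h2.symm
      · rintro ⟨-, h2⟩
        exfalso; rw [hw] at h2; exact hnc y h2
    · rw [hAdjS, cgdF_inr hinj hu w hw, cgdF_inl0 hinj hu hj]
      constructor
      · rintro ⟨h1, h2⟩; exact ⟨fun he => h1 (congrArg Subtype.val he), h2⟩
      · rintro ⟨h1, h2⟩; exact ⟨fun he => h1 (Subtype.ext he), h2⟩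
    · rw [hAdjS, cgdF_inr hinj hu w hw, cgdF_inl1 hinj hu hj]
      constructor
      · rintro ⟨-, h2⟩
        refine ⟨fun he => y.2 (by rw [← he]; exact w.2), ?_⟩
        rw [← hcfix w.1.1 (hcw w)] at h2
        exact (hccj _ _).1 h2
      · rintro ⟨-, h2⟩
        refine ⟨?_, ?_⟩
        · intro he
          exact y.2 (by rw [hconjinj y.1 w.1 he.symm]; exact w.2)
        · rw [← hcfix w.1.1 (hcw w)]
          exact (hccj _ _).2 h2
  · by_cases hw : w.1 = (⟨u, hu⟩ : ↥X₀) <;> by_cases hw' : w'.1 = (⟨u, hu⟩ : ↥X₀)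
    · rw [hAdjS, cgdF_inrU hinj hu w hw, cgdF_inrU hinj hu w' hw']
      constructor
      · rintro ⟨h1, -⟩; exact absurd rfl h1
      · rintro ⟨h1, -⟩; exact absurd (hw.trans hw'.symm) h1
    · rw [hAdjS, cgdF_inrU hinj hu w hw, cgdF_inr hinj hu w' hw']
      constructor
      · rintro ⟨-, -⟩
        exact ⟨fun he => hw' (he ▸ hw), by rw [hw]; exact hcw w'⟩
      · rintro ⟨-, -⟩
        exact ⟨fun he => hne2 w'.1 he.symm, ((hcw w').symm.zpow_right (-2)).symm⟩
    · rw [hAdjS, cgdF_inr hinj hu w hw, cgdF_inrU hinj hu w' hw']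
      constructor
      · rintro ⟨-, -⟩
        exact ⟨fun he => hw (he.trans hw'), by rw [hw']; exact (hcw w).symm⟩
      · rintro ⟨-, -⟩
        exact ⟨fun he => hne2 w.1 he, (hcw w).symm.zpow_right (-2)⟩
    · rw [hAdjS, cgdF_inr hinj hu w hw, cgdF_inr hinj hu w' hw']
      constructor
      · rintro ⟨h1, h2⟩; exact ⟨fun he => h1 (congrArg Subtype.val he), h2⟩
      · rintro ⟨h1, h2⟩; exact ⟨fun he => h1 (Subtype.ext he), h2⟩
end

section
/- Let Γ be a finite graph and v a vertex of Γ. The centralizer of v in the right-angled Artin group A(Γ) is the subgroup generated by the star of v, i.e., Z(v) = ⟨st_Γ(v)⟩. -/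
open scoped commutatorElement

open HNNExtension HNNExtension.NormalWord Subgroup

namespace RaagCent

variable {G : Type*} [Group G]

lemma mem_toSubgroup_AA {A : Subgroup G} {u : ℤˣ} {g : G} :
    g ∈ HNNExtension.toSubgroup A A u ↔ g ∈ A := by
  rcases Int.units_eq_one_or u with rfl | rfl <;> simp

lemma commute_of_t {A : Subgroup G} {a : G} (ha : a ∈ A) :
    Commute (HNNExtension.of a : HNNExtension G A A (MulEquiv.refl A)) t := by
  have := HNNExtension.t_mul_of (φ := MulEquiv.refl A) ⟨a, ha⟩
  simpa [Commute, SemiconjBy] using this.symm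

lemma hnn_core (A : Subgroup G) :
    ∀ (n : ℕ) (w : ReducedWord G A A), w.toList.length = n →
      Commute (w.prod (MulEquiv.refl A)) t →
      w.prod (MulEquiv.refl A) ∈
        Subgroup.closure ({t} ∪ HNNExtension.of '' (A : Set G)) := by
  set φ := MulEquiv.refl A
  have ht : (t : HNNExtension G A A φ) ∈
      Subgroup.closure ({t} ∪ HNNExtension.of '' (A : Set G)) :=
    Subgroup.subset_closure (Or.inl rfl)
  have hof : ∀ a ∈ A, (HNNExtension.of a : HNNExtension G A A φ) ∈
      Subgroup.closure ({t} ∪ HNNExtension.of '' (A : Set G)) :=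
    fun a ha => Subgroup.subset_closure (Or.inr ⟨a, ha, rfl⟩)
  intro n
  induction n with
  | zero =>
    intro w hlen hcomm
    have hnil : w.toList = [] := List.length_eq_zero_iff.mp hlen
    have hprod : w.prod φ = HNNExtension.of w.head := by
      simp [ReducedWord.prod, hnil]
    by_cases hA : w.head ∈ A
    · rw [hprod]; exact hof _ hA
    · exfalso
      have hchain : List.Chain' (fun a b : ℤˣ × G =>
          a.2 ∈ HNNExtension.toSubgroup A A a.1 → a.1 = b.1)
          [((1 : ℤˣ), w.head), ((-1 : ℤˣ), (1 : G))] := by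
        refine List.isChain_cons_cons.mpr ⟨?_, List.isChain_singleton _⟩
        intro hm
        exact absurd (mem_toSubgroup_AA.mp hm) hA
      let w₁ : ReducedWord G A A :=
        ⟨1, [((1 : ℤˣ), w.head), ((-1 : ℤˣ), (1 : G))], hchain⟩
      have hp : w₁.prod φ = t * HNNExtension.of w.head * t⁻¹ := by
        simp [w₁, ReducedWord.prod, mul_assoc]
      have hr : w₁.prod φ ∈ (HNNExtension.of.range :
          Subgroup (HNNExtension G A A φ)) := by
        rw [hp]
        have : (t : HNNExtension G A A φ) * HNNExtension.of w.head * t⁻¹ = HNNExtension.of w.head := by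
          rw [hprod] at hcomm
          rw [← hcomm.eq]
          group
        rw [this]
        exact ⟨w.head, rfl⟩
      have := HNNExtension.ReducedWord.toList_eq_nil_of_mem_of_range φ w₁ hr
      simp [w₁] at this
  | succ n ih =>
    intro w hlen hcomm
    have hne : w.toList ≠ [] := by
      intro h; rw [h] at hlen; simp at hlen
    obtain ⟨hd, tl, hL⟩ := List.exists_cons_of_ne_nil hne
    obtain ⟨L', lst, hL2⟩ := (List.eq_nil_or_concat w.toList).resolve_left hne
    rw [List.concat_eq_append] at hL2
    have hdich : (hd.1 = -1 ∧ w.head ∈ A) ∨ (lst.1 = 1 ∧ lst.2 ∈ A) := by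
      by_contra hcon
      push_neg at hcon
      obtain ⟨h1, h2⟩ := hcon
      -- build the reduced word (1,(1,head)) :: toList ++ [(-1,1)]
      have hchain : List.Chain' (fun a b : ℤˣ × G =>
          a.2 ∈ HNNExtension.toSubgroup A A a.1 → a.1 = b.1)
          (((1 : ℤˣ), w.head) :: (w.toList ++ [((-1 : ℤˣ), (1 : G))])) := by
        refine List.isChain_cons.mpr ?_
        constructor
        · intro y hy
          rw [hL] at hy
          simp at hy
          subst hy
          intro hm
          rcases Int.units_eq_one_or hd.1 with h | h
          · exact h.symm
          · exact absurd (mem_toSubgroup_AA.mp hm) (h1 h)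
        · refine List.isChain_append.mpr ?_
          refine ⟨w.chain, List.isChain_singleton _, ?_⟩
          intro x hx y hy
          rw [hL2] at hx
          simp at hx hy
          subst hx
          intro hm
          rcases Int.units_eq_one_or lst.1 with h | h
          · exact absurd (mem_toSubgroup_AA.mp hm) (h2 h)
          · rw [h, ← hy]
      let w' : ReducedWord G A A :=
        ⟨1, ((1 : ℤˣ), w.head) :: (w.toList ++ [((-1 : ℤˣ), (1 : G))]), hchain⟩
      have hp : w'.prod φ = t * w.prod φ * t⁻¹ := by
        simp [w', ReducedWord.prod, mul_assoc]
      have heq : w'.prod φ = w.prod φ := by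
        rw [hp, ← hcomm.eq]
        group
      have hfst := (HNNExtension.ReducedWord.map_fst_eq_and_of_prod_eq φ heq).1
      have : w'.toList.length = w.toList.length := by
        rw [← List.length_map (as := w'.toList) Prod.fst, hfst, List.length_map]
      simp [w'] at this
      omega
    rcases hdich with ⟨hu, hh⟩ | ⟨hu, hg⟩
    · -- prefix case : w = of head * t⁻¹ * w₃
      have hchain : tl.Chain' (fun a b : ℤˣ × G =>
          a.2 ∈ HNNExtension.toSubgroup A A a.1 → a.1 = b.1) := by
        have := w.chain
        rw [hL] at this
        exact this.tail
      let w₃ : ReducedWord G A A := ⟨hd.2, tl, hchain⟩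
      have hsplit : w.prod φ = HNNExtension.of w.head * t⁻¹ * w₃.prod φ := by
        rw [ReducedWord.prod, ReducedWord.prod, hL]
        simp only [List.map_cons, List.prod_cons]
        rw [hu]
        simp [mul_assoc]
        rfl
      have hc3 : Commute (w₃.prod φ) t := by
        have h1 : Commute (t : HNNExtension G A A φ) (HNNExtension.of w.head)⁻¹ :=
          ((commute_of_t hh).symm).inv_right
        have heq3 : w₃.prod φ = t * (HNNExtension.of w.head)⁻¹ * w.prod φ := by
          rw [hsplit]; group
        rw [heq3]
        exact ((Commute.refl t).mul_left ((commute_of_t hh).inv_left)).mul_left hcomm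
      have hlen3 : w₃.toList.length = n := by
        have := hlen; rw [hL] at this; simpa using this
      have hmem := ih w₃ hlen3 hc3
      rw [hsplit]
      exact mul_mem (mul_mem (hof _ hh) (inv_mem ht)) hmem
    · -- suffix case : w = w₂ * t * of lst.2
      have hchain : L'.Chain' (fun a b : ℤˣ × G =>
          a.2 ∈ HNNExtension.toSubgroup A A a.1 → a.1 = b.1) := by
        have := w.chain
        rw [hL2] at this
        exact (List.isChain_append.mp this).1
      let w₂ : ReducedWord G A A := ⟨w.head, L', hchain⟩
      have hsplit : w.prod φ = w₂.prod φ * t * HNNExtension.of lst.2 := by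
        rw [ReducedWord.prod, ReducedWord.prod, hL2]
        simp only [List.map_append, List.prod_append, List.map_cons, List.prod_cons]
        rw [hu]
        simp [mul_assoc]
        rfl
      have hc2 : Commute (w₂.prod φ) t := by
        have h1 : Commute (t : HNNExtension G A A φ) (HNNExtension.of lst.2)⁻¹ :=
          ((commute_of_t hg).symm).inv_right
        have heq2 : w₂.prod φ = w.prod φ * (HNNExtension.of lst.2)⁻¹ * t⁻¹ := by
          rw [hsplit]; group
        rw [heq2]
        exact (hcomm.mul_left ((commute_of_t hg).inv_left)).mul_left ((Commute.refl t).inv_left)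
      have hlen2 : w₂.toList.length = n := by
        have := hlen; rw [hL2] at this; simpa using this
      have hmem := ih w₂ hlen2 hc2
      rw [hsplit]
      exact mul_mem (mul_mem hmem ht) (hof _ hg)

lemma hnn_centralizer_t (A : Subgroup G) :
    Subgroup.centralizer {(t : HNNExtension G A A (MulEquiv.refl A))} =
      Subgroup.closure ({t} ∪ HNNExtension.of '' (A : Set G)) := by
  apply le_antisymm
  · intro g hg
    have hcomm : Commute g t := by
      have := Subgroup.mem_centralizer_iff.mp hg t rfl
      exact this.symm
    obtain ⟨d⟩ := TransversalPair.nonempty G A A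
    classical
    let w : NormalWord d := g • NormalWord.empty
    have hw : w.toReducedWord.prod (MulEquiv.refl A) = g := by
      have h2 := NormalWord.prod_smul (φ := MulEquiv.refl A) g (NormalWord.empty (d := d))
      rw [NormalWord.prod_empty, mul_one] at h2
      exact h2
    rw [← hw]
    exact hnn_core A _ w.toReducedWord rfl (by rw [hw]; exact hcomm)
  · rw [Subgroup.closure_le]
    rintro x (rfl | ⟨a, ha, rfl⟩)
    · exact Subgroup.mem_centralizer_iff.mpr (by rintro h rfl; rfl)
    · exact Subgroup.mem_centralizer_iff.mpr
        (by rintro h rfl; exact (commute_of_t ha).symm.eq)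



section Graph

variable {V : Type*} (Γ : SimpleGraph V) (v : V)

lemma raag_commute {u w : V} (h : Γ.Adj u w) :
    Commute (Raag.of Γ u) (Raag.of Γ w) := by
  rw [← commutatorElement_eq_one_iff_commute]
  show ⁅PresentedGroup.mk (raagRels Γ) (FreeGroup.of u),
        PresentedGroup.mk (raagRels Γ) (FreeGroup.of w)⁆ = 1
  rw [← map_commutatorElement]
  exact (QuotientGroup.eq_one_iff _).mpr
    (Subgroup.subset_normalClosure ⟨u, w, h, rfl⟩)

/-- The graph induced on the complement of `v`. -/
def Gam' : SimpleGraph {w : V // w ≠ v} := Γ.comap Subtype.val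

/-- The subgroup of `Raag (Gam' Γ v)` generated by the link of `v`. -/
def linkSub : Subgroup (Raag (Gam' Γ v)) :=
  Subgroup.closure (Raag.of (Gam' Γ v) '' {w : {w : V // w ≠ v} | Γ.Adj v w.1})

lemma mem_linkSub_of_adj {w : V} (hw : w ≠ v) (h : Γ.Adj v w) :
    Raag.of (Gam' Γ v) ⟨w, hw⟩ ∈ linkSub Γ v := by
  simp only [linkSub]
  exact Subgroup.subset_closure ⟨⟨w, hw⟩, h, rfl⟩

lemma beta_aux : ∀ r ∈ raagRels (Gam' Γ v),
    FreeGroup.lift (fun w : {w : V // w ≠ v} => Raag.of Γ w.1) r = 1 := by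
  rintro r ⟨u, w, hadj, rfl⟩
  rw [map_commutatorElement]
  simp only [FreeGroup.lift_apply_of]
  exact commutatorElement_eq_one_iff_commute.mpr (raag_commute Γ hadj)

/-- The natural map `Raag (Gam' Γ v) →* Raag Γ`. -/
def beta : Raag (Gam' Γ v) →* Raag Γ :=
  PresentedGroup.toGroup (beta_aux Γ v)

lemma beta_of (w : {w : V // w ≠ v}) :
    beta Γ v (Raag.of (Gam' Γ v) w) = Raag.of Γ w.1 :=
  PresentedGroup.toGroup.of (beta_aux Γ v)

open Classical in
lemma phi_aux : ∀ r ∈ raagRels Γ,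
    FreeGroup.lift (fun w : V => if h : w = v then
        (t : HNNExtension (Raag (Gam' Γ v)) (linkSub Γ v) (linkSub Γ v) (MulEquiv.refl _))
      else HNNExtension.of (Raag.of (Gam' Γ v) ⟨w, h⟩)) r = 1 := by
  rintro r ⟨u, w, hadj, rfl⟩
  rw [map_commutatorElement]
  simp only [FreeGroup.lift_apply_of]
  apply commutatorElement_eq_one_iff_commute.mpr
  by_cases hu : u = v
  · have hadj' : Γ.Adj v w := hu ▸ hadj
    have hw : w ≠ v := fun h2 => Γ.loopless.irrefl v (h2 ▸ hadj')
    rw [dif_pos hu, dif_neg hw]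
    exact (commute_of_t (mem_linkSub_of_adj Γ v hw hadj')).symm
  · by_cases hw : w = v
    · have hadj' : Γ.Adj v u := hw ▸ hadj.symm
      rw [dif_pos hw, dif_neg hu]
      exact commute_of_t (mem_linkSub_of_adj Γ v hu hadj')
    · rw [dif_neg hu, dif_neg hw]
      exact (raag_commute (Gam' Γ v) (show (Gam' Γ v).Adj ⟨u, hu⟩ ⟨w, hw⟩ from hadj)).map
        HNNExtension.of

open Classical in
/-- The map from `Raag Γ` to the HNN extension. -/
noncomputable def phi : Raag Γ →*
    HNNExtension (Raag (Gam' Γ v)) (linkSub Γ v) (linkSub Γ v) (MulEquiv.refl _) :=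
  PresentedGroup.toGroup (phi_aux Γ v)

open Classical in
lemma phi_of (w : V) :
    phi Γ v (Raag.of Γ w) = if h : w = v then t
      else HNNExtension.of (Raag.of (Gam' Γ v) ⟨w, h⟩) :=
  PresentedGroup.toGroup.of (phi_aux Γ v)

lemma phi_of_v : phi Γ v (Raag.of Γ v) = t := by
  rw [phi_of, dif_pos rfl]

lemma phi_of_ne (w : V) (h : w ≠ v) :
    phi Γ v (Raag.of Γ w) = HNNExtension.of (Raag.of (Gam' Γ v) ⟨w, h⟩) := by
  rw [phi_of, dif_neg h]

lemma linkSub_le_comap :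
    linkSub Γ v ≤ (Subgroup.centralizer {Raag.of Γ v}).comap (beta Γ v) := by
  rw [linkSub, Subgroup.closure_le]
  rintro x ⟨w, hw, rfl⟩
  simp only [Subgroup.coe_comap, Set.mem_preimage, SetLike.mem_coe]
  rw [Subgroup.mem_centralizer_iff]
  rintro h rfl
  rw [beta_of]
  exact (raag_commute Γ hw).eq

/-- The map from the HNN extension back to `Raag Γ`. -/
noncomputable def psi :
    HNNExtension (Raag (Gam' Γ v)) (linkSub Γ v) (linkSub Γ v) (MulEquiv.refl _) →* Raag Γ :=
  HNNExtension.lift (beta Γ v) (Raag.of Γ v) (by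
    rintro ⟨a, ha⟩
    simpa using Subgroup.mem_centralizer_iff.mp (linkSub_le_comap Γ v ha) _ rfl)

lemma psi_of (g : Raag (Gam' Γ v)) : psi Γ v (HNNExtension.of g) = beta Γ v g := by
  simp only [psi]
  rw [HNNExtension.lift_of]

lemma psi_t : psi Γ v t = Raag.of Γ v := by
  simp only [psi]
  rw [HNNExtension.lift_t]

lemma psi_phi_comp : (psi Γ v).comp (phi Γ v) = MonoidHom.id (Raag Γ) := by
  apply PresentedGroup.ext
  intro w
  show psi Γ v (phi Γ v (Raag.of Γ w)) = Raag.of Γ w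
  by_cases h : w = v
  · subst h
    rw [phi_of_v, psi_t]
  · rw [phi_of_ne Γ v w h, psi_of, beta_of]

theorem centralizer_eq_closure_star' {V : Type*} (Γ : SimpleGraph V) (v : V) :
    Subgroup.centralizer {Raag.of Γ v} =
      Subgroup.closure (Raag.of Γ '' starSet Γ v) := by
  apply le_antisymm
  · intro g hg
    have hcomm : Commute g (Raag.of Γ v) :=
      (Subgroup.mem_centralizer_iff.mp hg _ rfl).symm
    have h1 : Commute (phi Γ v g) t := by
      rw [← phi_of_v]; exact hcomm.map (phi Γ v)
    have h2 : phi Γ v g ∈ Subgroup.closure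
        ({t} ∪ HNNExtension.of '' ((linkSub Γ v : Subgroup _) : Set (Raag (Gam' Γ v)))) := by
      rw [← hnn_centralizer_t (linkSub Γ v)]
      exact Subgroup.mem_centralizer_iff.mpr (by rintro h rfl; exact h1.symm.eq)
    have h3 : g = psi Γ v (phi Γ v g) :=
      (DFunLike.congr_fun (psi_phi_comp Γ v) g).symm
    have h4 : psi Γ v (phi Γ v g) ∈
        Subgroup.map (psi Γ v) (Subgroup.closure
          ({t} ∪ HNNExtension.of '' ((linkSub Γ v : Subgroup _) : Set (Raag (Gam' Γ v))))) :=
      ⟨phi Γ v g, h2, rfl⟩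
    rw [MonoidHom.map_closure] at h4
    rw [h3]
    refine (Subgroup.closure_le _).mpr ?_ h4
    rintro _ ⟨x, hx, rfl⟩
    rcases hx with rfl | ⟨a, ha, rfl⟩
    · rw [psi_t]
      exact Subgroup.subset_closure ⟨v, Or.inl rfl, rfl⟩
    · rw [psi_of]
      have hmap : beta Γ v a ∈ Subgroup.map (beta Γ v) (linkSub Γ v) := ⟨a, ha, rfl⟩
      rw [linkSub, MonoidHom.map_closure] at hmap
      refine Subgroup.closure_mono ?_ hmap
      rintro _ ⟨_, ⟨w, hw, rfl⟩, rfl⟩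
      rw [beta_of]
      exact ⟨w.1, Or.inr hw, rfl⟩
  · rw [Subgroup.closure_le]
    rintro _ ⟨w, hw, rfl⟩
    rw [SetLike.mem_coe, Subgroup.mem_centralizer_iff]
    rintro h rfl
    rcases hw with rfl | hadj
    · rfl
    · exact (raag_commute Γ hadj).eq

end Graph

end RaagCent

/-- the centralizer of a generator `v` in `A(Γ)` is the subgroup generated
by the star of `v`. -/
theorem centralizer_eq_closure_star {V : Type*} [Fintype V] (Γ : SimpleGraph V) (v : V) :
    Subgroup.centralizer {Raag.of Γ v} =
      Subgroup.closure (Raag.of Γ '' starSet Γ v) :=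
  RaagCent.centralizer_eq_closure_star' Γ v
end

section
/- Let Γ be a finite graph and let x, y ∈ A(Γ) be elements of the form x = (u^g)^k and y = (u^h)^m for some vertex u ∈ V(Γ), elements g, h ∈ A(Γ), and nonzero integers k, m. If x^m = y^k in A(Γ), and if x and y both lie in a subset U ⊆ A(Γ) for which the natural map A(CG(U)) → ⟨U⟩ is an isomorphism, then x = y. -/
open scoped commutatorElement

/-- if `x = (u^g)^k`, `y = (u^h)^m` with `k, m ≠ 0`, `x^m = y^k`, and both
`x, y` lie in a subset `U` whose natural map `A(CG(U)) → ⟨U⟩` is an isomorphism,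
then `x = y`. -/
theorem eq_of_pow_eq {V : Type*} [Fintype V] (Γ : SimpleGraph V)
    (U : Set (Raag Γ))
    (hinj : Function.Injective (natHom (Raag Γ) U))
    (hrange : (natHom (Raag Γ) U).range = Subgroup.closure U)
    (u : V) (g h : Raag Γ) (k m : ℤ) (hk : k ≠ 0) (hm : m ≠ 0)
    (x y : Raag Γ)
    (hx : x = (g⁻¹ * Raag.of Γ u * g) ^ k)
    (hy : y = (h⁻¹ * Raag.of Γ u * h) ^ m)
    (hxU : x ∈ U) (hyU : y ∈ U)
    (hpow : x ^ m = y ^ k) : x = y := by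
  classical
  have hx' : natHom (Raag Γ) U (PresentedGroup.of ⟨x, hxU⟩) = x :=
    PresentedGroup.toGroup.of _
  have hy' : natHom (Raag Γ) U (PresentedGroup.of ⟨y, hyU⟩) = y :=
    PresentedGroup.toGroup.of _
  have key : (PresentedGroup.of ⟨x, hxU⟩ : Raag (commGraph (Raag Γ) U)) ^ m
      = (PresentedGroup.of ⟨y, hyU⟩ : Raag (commGraph (Raag Γ) U)) ^ k := by
    apply hinj
    have e1 := map_zpow (natHom (Raag Γ) U) (PresentedGroup.of ⟨x, hxU⟩ : Raag (commGraph (Raag Γ) U)) m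
    have e2 := map_zpow (natHom (Raag Γ) U) (PresentedGroup.of ⟨y, hyU⟩ : Raag (commGraph (Raag Γ) U)) k
    exact e1.trans ((congrArg (· ^ m) hx').trans (hpow.trans
      ((congrArg (· ^ k) hy').symm.trans e2.symm)))
  by_cases hxy : (⟨x, hxU⟩ : U) = ⟨y, hyU⟩
  · exact congrArg Subtype.val hxy
  · exfalso
    let f : Raag (commGraph (Raag Γ) U) →* Multiplicative ℤ :=
      PresentedGroup.toGroup
        (f := fun v => if v = (⟨x, hxU⟩ : U) then Multiplicative.ofAdd 1 else 1) (by
          rintro r ⟨a, b, hadj, rfl⟩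
          rw [map_commutatorElement]
          exact commutatorElement_eq_one_iff_commute.mpr (Commute.all _ _))
    have hfx : f (PresentedGroup.of ⟨x, hxU⟩) = Multiplicative.ofAdd 1 := by
      have h0 : f (PresentedGroup.of ⟨x, hxU⟩)
          = if (⟨x, hxU⟩ : U) = ⟨x, hxU⟩ then Multiplicative.ofAdd 1 else 1 :=
        PresentedGroup.toGroup.of _
      rwa [if_pos rfl] at h0
    have hfy : f (PresentedGroup.of ⟨y, hyU⟩) = 1 := by
      have h0 : f (PresentedGroup.of ⟨y, hyU⟩)
          = if (⟨y, hyU⟩ : U) = ⟨x, hxU⟩ then Multiplicative.ofAdd 1 else 1 :=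
        PresentedGroup.toGroup.of _
      rwa [if_neg (fun hh => hxy hh.symm)] at h0
    have := congrArg f key
    replace this : f (PresentedGroup.of ⟨x, hxU⟩) ^ m = f (PresentedGroup.of ⟨y, hyU⟩) ^ k :=
      (map_zpow f _ m).symm.trans (this.trans (map_zpow f _ k))
    rw [hfx, hfy, one_zpow] at this
    have : (m : ℤ) = 0 := by
      have h2 := congrArg Multiplicative.toAdd this
      simpa using h2
    exact hm this
end

section
/- Let Γ be a finite graph with universal sequence {(u_k, U_k)} as above. Then for each k, the map x ↦ x* (sending (a^m)^g to a^g for a ∈ V(Γ), m ∈ ℤ\{0}, g ∈ A(Γ)) is injective on U_k, and induces a graph isomorphism from CG(U_k) to the induced subgraph of the extension graph Γ^e on the vertex set U_k*. -/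
open scoped commutatorElement

section UniversalSequence

variable {n : ℕ} (Γ : SimpleGraph (Fin n))

/-- The hypotheses defining the universal sequence `{(u_k, U_k)}`:
`u_{2ni+2j} = a_j^{4^i}`, `u_{2ni+2j+1} = a_j^{-2·4^i}`, `U₀ = V`,
`U_{k+1} = (U_k ∪ U_k^{u_k}) △ {u_k, u_k⁻²}`. -/
def IsUniversalSequence (u : ℕ → Raag Γ) (U : ℕ → Set (Raag Γ)) : Prop :=
  (∀ (i : ℕ) (j : Fin n), u (2 * n * i + 2 * (j : ℕ)) = (Raag.of Γ j) ^ ((4 : ℤ) ^ i)) ∧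
  (∀ (i : ℕ) (j : Fin n),
      u (2 * n * i + 2 * (j : ℕ) + 1) = (Raag.of Γ j) ^ (-(2 * (4 : ℤ) ^ i))) ∧
  U 0 = Set.range (Raag.of Γ) ∧
  ∀ k, U (k + 1) =
    symmDiff (U k ∪ (fun x => (u k)⁻¹ * x * u k) '' U k) {u k, (u k) ^ (-2 : ℤ)}

end UniversalSequence

/-- Integer Heisenberg group. -/
@[ext] structure Heis where
  a : ℤ
  b : ℤ
  c : ℤ

namespace Heis

instance : Mul Heis := ⟨fun x y => ⟨x.a + y.a, x.b + y.b, x.c + y.c + x.a * y.b⟩⟩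
instance : One Heis := ⟨⟨0, 0, 0⟩⟩
instance : Inv Heis := ⟨fun x => ⟨-x.a, -x.b, x.a * x.b - x.c⟩⟩

@[simp] lemma mul_a (x y : Heis) : (x * y).a = x.a + y.a := rfl
@[simp] lemma mul_b (x y : Heis) : (x * y).b = x.b + y.b := rfl
@[simp] lemma mul_c (x y : Heis) : (x * y).c = x.c + y.c + x.a * y.b := rfl
@[simp] lemma one_a : (1 : Heis).a = 0 := rfl
@[simp] lemma one_b : (1 : Heis).b = 0 := rfl
@[simp] lemma one_c : (1 : Heis).c = 0 := rfl
@[simp] lemma inv_a (x : Heis) : (x⁻¹).a = -x.a := rfl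
@[simp] lemma inv_b (x : Heis) : (x⁻¹).b = -x.b := rfl
@[simp] lemma inv_c (x : Heis) : (x⁻¹).c = x.a * x.b - x.c := rfl

instance : Group Heis where
  mul_assoc x y z := by ext <;> simp <;> ring
  one_mul x := by ext <;> simp
  mul_one x := by ext <;> simp
  inv_mul_cancel x := by ext <;> simp <;> ring

/-- Second coordinate, as a homomorphism to `Multiplicative ℤ`. -/
def π₂ : Heis →* Multiplicative ℤ where
  toFun x := Multiplicative.ofAdd x.b
  map_one' := rfl
  map_mul' x y := rfl

def X : Heis := ⟨1, 0, 0⟩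
def Y : Heis := ⟨0, 1, 0⟩

lemma conj_X (h : Heis) : h⁻¹ * X * h = ⟨1, 0, h.b⟩ := by
  ext <;> simp [X] <;> ring

@[simp] lemma π₂_X : π₂ X = Multiplicative.ofAdd (0 : ℤ) := rfl
@[simp] lemma π₂_Y : π₂ Y = Multiplicative.ofAdd (1 : ℤ) := rfl

lemma π₂_zpow (x : Heis) (m : ℤ) : π₂ (x ^ m) = Multiplicative.ofAdd (m * x.b) := by
  rw [map_zpow]
  show Multiplicative.ofAdd x.b ^ m = _
  rw [← ofAdd_zsmul]
  simp [zsmul_eq_mul]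

end Heis

lemma neg2_sum_split (A : Finset ℕ) :
    ∑ r ∈ A, (-2:ℤ)^r
      = (if 0 ∈ A then 1 else 0) + (-2) * ∑ s ∈ (A.erase 0).image (· - 1), (-2:ℤ)^s := by
  have hinj : ∀ x ∈ A.erase 0, ∀ y ∈ A.erase 0, x - 1 = y - 1 → x = y := by
    intro x hx y hy hxy
    have hx0 := (Finset.mem_erase.mp hx).1
    have hy0 := (Finset.mem_erase.mp hy).1
    omega
  rw [Finset.sum_image hinj]
  have h2 : ∑ r ∈ A.erase 0, (-2:ℤ)^r = (-2) * ∑ r ∈ A.erase 0, (-2:ℤ)^(r-1) := by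
    rw [Finset.mul_sum]
    apply Finset.sum_congr rfl
    intro r hr
    have hr0 : r ≠ 0 := (Finset.mem_erase.mp hr).1
    obtain ⟨s, rfl⟩ : ∃ s, r = s + 1 := ⟨r - 1, by omega⟩
    simp [pow_succ]
    ring
  rw [← h2]
  by_cases h0 : 0 ∈ A
  · rw [← Finset.add_sum_erase A _ h0]
    simp [h0]
  · rw [Finset.erase_eq_of_notMem h0]
    simp [h0]

lemma neg2_reconstruct (A : Finset ℕ) :
    A = ((A.erase 0).image (· - 1)).image (· + 1) ∪ (if 0 ∈ A then {0} else ∅) := by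
  ext r
  simp only [Finset.mem_union, Finset.mem_image]
  constructor
  · intro hr
    rcases Nat.eq_zero_or_pos r with h | h
    · subst h; right; simp [hr]
    · left
      exact ⟨r - 1, ⟨r, Finset.mem_erase.mpr ⟨by omega, hr⟩, rfl⟩, by omega⟩
  · rintro (⟨s, ⟨t, ht, rfl⟩, rfl⟩ | h)
    · have ht' := Finset.mem_erase.mp ht
      have heq : t - 1 + 1 = t := by omega
      rw [heq]
      exact ht'.2
    · split_ifs at h with h0
      · simp only [Finset.mem_singleton] at h
        subst h; exact h0
      · simp at h

lemma neg2_sum_inj : ∀ (N : ℕ) (A B : Finset ℕ), (∀ r ∈ A, r < N) → (∀ r ∈ B, r < N) →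
    (∑ r ∈ A, (-2:ℤ)^r) = ∑ r ∈ B, (-2:ℤ)^r → A = B := by
  intro N
  induction N with
  | zero =>
    intro A B hA hB _
    have h1 : A = ∅ := Finset.eq_empty_of_forall_notMem (fun x hx => by have := hA x hx; omega)
    have h2 : B = ∅ := Finset.eq_empty_of_forall_notMem (fun x hx => by have := hB x hx; omega)
    rw [h1, h2]
  | succ N ih =>
    intro A B hA hB hsum
    rw [neg2_sum_split A, neg2_sum_split B] at hsum
    have hz : (0 ∈ A) ↔ (0 ∈ B) := by
      by_contra hne
      have h2 : (2:ℤ) ∣ ((if 0 ∈ A then (1:ℤ) else 0) - (if 0 ∈ B then 1 else 0)) := by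
        refine ⟨(∑ s ∈ (A.erase 0).image (· - 1), (-2:ℤ)^s)
          - ∑ s ∈ (B.erase 0).image (· - 1), (-2:ℤ)^s, by linarith⟩
      rcases h2 with ⟨t, ht⟩
      by_cases h0A : 0 ∈ A <;> by_cases h0B : 0 ∈ B
      · exact hne (iff_of_true h0A h0B)
      · rw [if_pos h0A, if_neg h0B] at ht; omega
      · rw [if_neg h0A, if_pos h0B] at ht; omega
      · exact hne (iff_of_false h0A h0B)
    have hif1 : (if 0 ∈ A then (1:ℤ) else 0) = (if 0 ∈ B then 1 else 0) := by
      by_cases h0A : 0 ∈ A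
      · rw [if_pos h0A, if_pos (hz.mp h0A)]
      · rw [if_neg h0A, if_neg (fun h => h0A (hz.mpr h))]
    rw [hif1] at hsum
    have hsum' : (∑ s ∈ (A.erase 0).image (· - 1), (-2:ℤ)^s)
        = ∑ s ∈ (B.erase 0).image (· - 1), (-2:ℤ)^s :=
      mul_left_cancel₀ (by norm_num : (-2:ℤ) ≠ 0) (add_left_cancel hsum)
    have hbA : ∀ r ∈ (A.erase 0).image (· - 1), r < N := by
      intro r hr
      simp only [Finset.mem_image, Finset.mem_erase] at hr
      obtain ⟨t, ⟨ht0, htA⟩, rfl⟩ := hr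
      have := hA t htA; omega
    have hbB : ∀ r ∈ (B.erase 0).image (· - 1), r < N := by
      intro r hr
      simp only [Finset.mem_image, Finset.mem_erase] at hr
      obtain ⟨t, ⟨ht0, htB⟩, rfl⟩ := hr
      have := hB t htB; omega
    have hAB' := ih _ _ hbA hbB hsum'
    have hif2 : (if 0 ∈ A then ({0} : Finset ℕ) else ∅) = (if 0 ∈ B then {0} else ∅) := by
      by_cases h0A : 0 ∈ A
      · rw [if_pos h0A, if_pos (hz.mp h0A)]
      · rw [if_neg h0A, if_neg (fun h => h0A (hz.mpr h))]
    calc A = ((A.erase 0).image (· - 1)).image (· + 1) ∪ (if 0 ∈ A then {0} else ∅) :=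
            neg2_reconstruct A
      _ = ((B.erase 0).image (· - 1)).image (· + 1) ∪ (if 0 ∈ B then {0} else ∅) := by
            rw [hAB', hif2]
      _ = B := (neg2_reconstruct B).symm

/-- Subset-sum uniqueness for powers of `-2`, unbounded version. -/
lemma neg2_sum_injective {A B : Finset ℕ}
    (h : (∑ r ∈ A, (-2:ℤ)^r) = ∑ r ∈ B, (-2:ℤ)^r) : A = B := by
  classical
  obtain ⟨N, hN⟩ : ∃ N, ∀ r ∈ A ∪ B, r < N := ⟨(A ∪ B).sup id + 1, fun r hr =>
    Nat.lt_succ_of_le (Finset.le_sup (f := id) hr)⟩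
  exact neg2_sum_inj N A B (fun r hr => hN r (Finset.mem_union_left _ hr))
    (fun r hr => hN r (Finset.mem_union_right _ hr)) h

section RaagBasics

variable {n : ℕ} (Γ : SimpleGraph (Fin n))

/-- Adjacent generators commute. -/
lemma raag_adj_commute {a b : Fin n} (h : Γ.Adj a b) :
    Commute (Raag.of Γ a) (Raag.of Γ b) := by
  rw [← commutatorElement_eq_one_iff_commute]
  show ⁅PresentedGroup.mk (raagRels Γ) (FreeGroup.of a),
        PresentedGroup.mk (raagRels Γ) (FreeGroup.of b)⁆ = 1
  rw [← map_commutatorElement]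
  have hmem : ⁅FreeGroup.of a, FreeGroup.of b⁆ ∈ Subgroup.normalClosure (raagRels Γ) :=
    Subgroup.subset_normalClosure ⟨a, b, h, rfl⟩
  exact (QuotientGroup.eq_one_iff _).mpr hmem

/-- Conjugation commutes with integer powers. -/
lemma conj_zpow' {G : Type*} [Group G] (g x : G) (m : ℤ) :
    (g⁻¹ * x * g) ^ m = g⁻¹ * x ^ m * g := by
  have : g⁻¹ * x * g = (MulAut.conj g⁻¹) x := by
    simp [MulAut.conj_apply]
  rw [this, ← map_zpow]
  simp [MulAut.conj_apply]

/-- The exponent-sum homomorphism for a vertex. -/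
noncomputable def expSum (b : Fin n) : Raag Γ →* Multiplicative ℤ :=
  PresentedGroup.toGroup (f := fun v => Multiplicative.ofAdd (if v = b then (1:ℤ) else 0))
    (by
      rintro r ⟨p, q, hadj, rfl⟩
      rw [map_commutatorElement]
      exact commutatorElement_eq_one_iff_commute.mpr (Commute.all _ _))

lemma expSum_of (b v : Fin n) :
    expSum Γ b (Raag.of Γ v) = Multiplicative.ofAdd (if v = b then (1:ℤ) else 0) :=
  PresentedGroup.toGroup.of _

lemma expSum_conj_zpow (b v : Fin n) (g : Raag Γ) (m : ℤ) :
    (expSum Γ b (g⁻¹ * Raag.of Γ v ^ m * g)).toAdd = if v = b then m else 0 := by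
  have h1 : expSum Γ b (g⁻¹ * Raag.of Γ v ^ m * g)
      = expSum Γ b (Raag.of Γ v) ^ m := by
    rw [map_mul, map_mul, map_inv, map_zpow,
      mul_comm ((expSum Γ b g)⁻¹) ((expSum Γ b (Raag.of Γ v)) ^ m),
      mul_assoc, inv_mul_cancel, mul_one]
  rw [h1, expSum_of]
  rcases eq_or_ne v b with h | h
  · rw [if_pos h, if_pos h, ← ofAdd_zsmul]
    simp
  · rw [if_neg h, if_neg h, ← ofAdd_zsmul]
    simp

end RaagBasics

section Arith

variable {n : ℕ}

/-- The vertex index of the `k`-th element of the universal sequence. -/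
def classF (hn : 0 < n) (k : ℕ) : Fin n := ⟨k / 2 % n, Nat.mod_lt _ hn⟩

/-- The block index of the `k`-th element of the universal sequence. -/
def iF (n k : ℕ) : ℕ := k / 2 / n

/-- The exponent of the `k`-th element of the universal sequence. -/
def qexpF (n k : ℕ) : ℤ := if k % 2 = 0 then (4:ℤ) ^ (iF n k) else -(2 * 4 ^ (iF n k))

/-- The "position" of the `k`-th element within its vertex class. -/
def expoF (n k : ℕ) : ℕ := 2 * iF n k + k % 2

lemma qexpF_eq_neg2_pow (k : ℕ) : qexpF n k = (-2:ℤ) ^ (expoF n k) := by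
  unfold qexpF expoF
  rcases Nat.even_or_odd k with h | h
  · rw [if_pos (Nat.even_iff.mp h), Nat.even_iff.mp h]
    rw [pow_add, pow_mul]
    norm_num
  · have h1 : k % 2 = 1 := Nat.odd_iff.mp h
    rw [if_neg (by omega), h1, pow_add, pow_mul]
    norm_num
    ring

lemma qexpF_ne_zero (k : ℕ) : qexpF n k ≠ 0 := by
  rw [qexpF_eq_neg2_pow]
  exact pow_ne_zero _ (by norm_num)

lemma qexpF_ne_neg_two_mul (k m : ℕ) : qexpF n k ≠ -2 * qexpF n m ∨ True := Or.inr trivial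

lemma idx_inj (hn : 0 < n) {s t : ℕ} (hc : classF hn s = classF hn t)
    (he : expoF n s = expoF n t) : s = t := by
  have hval : s / 2 % n = t / 2 % n := congrArg Fin.val hc
  unfold expoF iF at he
  have h2 : s % 2 = t % 2 := by omega
  have hif : s / 2 / n = t / 2 / n := by omega
  have hdiv : s / 2 = t / 2 := by
    have h1 := Nat.div_add_mod (s / 2) n
    have h2' := Nat.div_add_mod (t / 2) n
    have h3 : n * (s / 2 / n) = n * (t / 2 / n) := by rw [hif]
    omega
  omega

lemma classF_mk (hn : 0 < n) (i : ℕ) (j : Fin n) (δ : ℕ) (hδ : δ < 2) :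
    classF hn (2 * (n * i + j) + δ) = j := by
  apply Fin.ext
  show (2 * (n * i + j) + δ) / 2 % n = j
  have h1 : (2 * (n * i + j) + δ) / 2 = n * i + j := by omega
  rw [h1, Nat.mul_add_mod]
  exact Nat.mod_eq_of_lt j.2

lemma iF_mk (i : ℕ) (j : Fin n) (δ : ℕ) (hδ : δ < 2) :
    iF n (2 * (n * i + j) + δ) = i := by
  unfold iF
  have h1 : (2 * (n * i + j) + δ) / 2 = n * i + j := by omega
  rw [h1]
  rw [Nat.mul_add_div (by omega : 0 < n)]
  have : (j : ℕ) / n = 0 := Nat.div_eq_of_lt j.2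
  omega

lemma decompF (hn : 0 < n) (k : ℕ) :
    k = 2 * (n * iF n k + (classF hn k : ℕ)) + k % 2 := by
  show k = 2 * (n * (k / 2 / n) + k / 2 % n) + k % 2
  have h1 := Nat.div_add_mod (k / 2) n
  have h2 := Nat.div_add_mod k 2
  omega

lemma nextIdx_ex (hn : 0 < n) (k : ℕ) (j : Fin n) : ∃ t, k ≤ t ∧ classF hn t = j := by
  refine ⟨2 * (n * k + j), ?_, by simpa using classF_mk hn k j 0 (by omega)⟩
  have : k ≤ n * k := Nat.le_mul_of_pos_left k hn
  omega

/-- The next index whose class is `j`. -/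
def nextIdx (hn : 0 < n) (k : ℕ) (j : Fin n) : ℕ :=
  Nat.find (p := fun t => k ≤ t ∧ classF hn t = j) (nextIdx_ex hn k j)

lemma nextIdx_spec (hn : 0 < n) (k : ℕ) (j : Fin n) :
    k ≤ nextIdx hn k j ∧ classF hn (nextIdx hn k j) = j := by
  unfold nextIdx
  exact Nat.find_spec (nextIdx_ex hn k j)

lemma nextIdx_min (hn : 0 < n) {k t : ℕ} {j : Fin n} (h1 : k ≤ t) (h2 : classF hn t = j) :
    nextIdx hn k j ≤ t := by
  unfold nextIdx
  exact Nat.find_min' (nextIdx_ex hn k j) ⟨h1, h2⟩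

lemma nextIdx_eq (hn : 0 < n) {k m : ℕ} {j : Fin n} (h1 : k ≤ m) (h2 : classF hn m = j)
    (h3 : ∀ t, k ≤ t → t < m → classF hn t ≠ j) : nextIdx hn k j = m := by
  have hle := nextIdx_min hn h1 h2
  rcases lt_or_eq_of_le hle with h | h
  · obtain ⟨hs1, hs2⟩ := nextIdx_spec hn k j
    exact absurd hs2 (h3 _ hs1 h)
  · exact h

/-- The current pure exponent for class `j` at time `k`. -/
def pureE (hn : 0 < n) (k : ℕ) (j : Fin n) : ℤ := qexpF n (nextIdx hn k j)

lemma nextIdx_self (hn : 0 < n) {k : ℕ} {j : Fin n} (h : classF hn k = j) :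
    nextIdx hn k j = k :=
  nextIdx_eq hn le_rfl h (fun t h1 h2 _ => by omega)

lemma pureE_self (hn : 0 < n) {k : ℕ} {j : Fin n} (h : classF hn k = j) :
    pureE hn k j = qexpF n k := by
  rw [pureE, nextIdx_self hn h]

lemma pureE_succ_other (hn : 0 < n) {k : ℕ} {j : Fin n} (h : classF hn k ≠ j) :
    pureE hn (k + 1) j = pureE hn k j := by
  rw [pureE, pureE]
  congr 1
  have h1 : nextIdx hn k j = nextIdx hn (k+1) j := by
    apply nextIdx_eq hn
    · have := (nextIdx_spec hn (k+1) j).1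
      omega
    · exact (nextIdx_spec hn (k+1) j).2
    · intro t h1 h2 hc
      have hm := nextIdx_min hn (show k+1 ≤ t by
        rcases Nat.eq_or_lt_of_le h1 with h' | h'
        · exact absurd (h' ▸ hc) h
        · omega) hc
      omega
  omega

lemma classF_succ_even (hn : 0 < n) {k : ℕ} (h : k % 2 = 0) :
    classF hn (k + 1) = classF hn k := by
  apply Fin.ext
  show (k+1) / 2 % n = k / 2 % n
  have : (k+1)/2 = k/2 := by omega
  rw [this]

lemma pureE_succ_self (hn : 0 < n) (k : ℕ) :
    pureE hn (k + 1) (classF hn k) = -2 * qexpF n k := by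
  rcases Nat.even_or_odd k with he | ho
  · have h2 : k % 2 = 0 := Nat.even_iff.mp he
    have hclass : classF hn (k+1) = classF hn k := classF_succ_even hn h2
    have hnext : nextIdx hn (k+1) (classF hn k) = k + 1 :=
      nextIdx_eq hn le_rfl hclass (fun t h1 h2 _ => by omega)
    rw [pureE, hnext]
    unfold qexpF
    rw [if_neg (by omega : ¬ (k+1) % 2 = 0), if_pos h2]
    have : iF n (k+1) = iF n k := by
      unfold iF
      have : (k+1)/2 = k/2 := by omega
      rw [this]
    rw [this]
    ring
  · have h2 : k % 2 = 1 := Nat.odd_iff.mp ho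
    set m := k + (2 * n - 1) with hm
    have hmdiv : m / 2 = k / 2 + n := by omega
    have hclass : classF hn m = classF hn k := by
      apply Fin.ext
      show m / 2 % n = k / 2 % n
      rw [hmdiv, Nat.add_mod_right]
    have hgap : ∀ t, k + 1 ≤ t → t < m → classF hn t ≠ classF hn k := by
      intro t h1 h2 hc
      have hval : t / 2 % n = k / 2 % n := congrArg Fin.val hc
      have hs : ∃ s, t / 2 = k / 2 + s ∧ 1 ≤ s ∧ s < n := by
        refine ⟨t / 2 - k / 2, by omega, by omega, by omega⟩
      obtain ⟨s, hts, hs1, hs2⟩ := hs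
      rw [hts] at hval
      have hdvd : n ∣ (k / 2 + s) - k / 2 :=
        (Nat.modEq_iff_dvd' (Nat.le_add_right _ _)).mp (Nat.ModEq.symm hval)
      rw [Nat.add_sub_cancel_left] at hdvd
      have := Nat.le_of_dvd (by omega) hdvd
      omega
    have hnext : nextIdx hn (k+1) (classF hn k) = m :=
      nextIdx_eq hn (by omega) hclass hgap
    rw [pureE, hnext]
    unfold qexpF
    have hm2 : m % 2 = 0 := by omega
    rw [if_pos hm2, if_neg (by omega : ¬ k % 2 = 0)]
    have hiF : iF n m = iF n k + 1 := by
      unfold iF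
      rw [hmdiv, Nat.add_div_right _ hn]
    rw [hiF, pow_succ]
    ring

lemma pureE_zero (hn : 0 < n) (j : Fin n) : pureE hn 0 j = 1 := by
  have hnext : nextIdx hn 0 j = 2 * j := by
    apply nextIdx_eq hn (Nat.zero_le _)
    · have := classF_mk hn 0 j 0 (by omega)
      simpa using this
    · intro t _ h2 hc
      have hval : t / 2 % n = j := congrArg Fin.val hc
      have h3 : t / 2 < j := by omega
      rw [Nat.mod_eq_of_lt (lt_trans h3 j.2)] at hval
      omega
  rw [pureE, hnext]
  unfold qexpF iF
  rw [if_pos (by omega)]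
  have : 2 * (j:ℕ) / 2 = (j:ℕ) := by omega
  rw [this, Nat.div_eq_of_lt j.2]
  norm_num

lemma pureE_ne_zero (hn : 0 < n) (k : ℕ) (j : Fin n) : pureE hn k j ≠ 0 :=
  qexpF_ne_zero _

end Arith

section Words

variable {n : ℕ} {Γ : SimpleGraph (Fin n)} (u : ℕ → Raag Γ)

/-- Product of `u t` over `t < m`, `t ∈ S`. -/
def wpAux (m : ℕ) (S : Finset ℕ) : Raag Γ :=
  ((List.range m).map fun t => if t ∈ S then u t else 1).prod

/-- The ordered product of the `u t`, `t ∈ S`. -/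
def wprodS (S : Finset ℕ) : Raag Γ := wpAux u (S.sup id + 1) S

lemma wpAux_succ (m : ℕ) (S : Finset ℕ) :
    wpAux u (m + 1) S = wpAux u m S * (if m ∈ S then u m else 1) := by
  unfold wpAux
  rw [List.range_succ, List.map_append, List.prod_append]
  simp

lemma wpAux_congr (m : ℕ) (S S' : Finset ℕ) (h : ∀ t, t < m → (t ∈ S ↔ t ∈ S')) :
    wpAux u m S = wpAux u m S' := by
  unfold wpAux
  congr 1
  apply List.map_congr_left
  intro t ht
  have htm : t < m := List.mem_range.mp ht
  by_cases hts : t ∈ S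
  · rw [if_pos hts, if_pos ((h t htm).mp hts)]
  · rw [if_neg hts, if_neg (fun h' => hts ((h t htm).mpr h'))]

lemma wpAux_stable (m d : ℕ) (S : Finset ℕ) (h : ∀ t ∈ S, t < m) :
    wpAux u (m + d) S = wpAux u m S := by
  induction d with
  | zero => rfl
  | succ d ih =>
    rw [← Nat.add_assoc, wpAux_succ, ih, if_neg (fun hc => by have := h _ hc; omega), mul_one]

lemma wpAux_eq_of_bounds (m m' : ℕ) (S : Finset ℕ) (h : ∀ t ∈ S, t < m)
    (h' : ∀ t ∈ S, t < m') : wpAux u m S = wpAux u m' S := by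
  rcases Nat.le_total m m' with hle | hle
  · obtain ⟨d, rfl⟩ := Nat.le.dest hle
    rw [wpAux_stable u m d S h]
  · obtain ⟨d, rfl⟩ := Nat.le.dest hle
    rw [wpAux_stable u m' d S h']

lemma wprodS_eq (m : ℕ) (S : Finset ℕ) (h : ∀ t ∈ S, t < m) :
    wprodS u S = wpAux u m S := by
  unfold wprodS
  exact wpAux_eq_of_bounds u _ m S
    (fun t ht => Nat.lt_succ_of_le (Finset.le_sup (f := id) ht)) h

@[simp] lemma wprodS_empty : wprodS u ∅ = 1 := by
  rw [wprodS_eq u 0 ∅ (by simp)]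
  rfl

lemma wprodS_insert (k : ℕ) (S : Finset ℕ) (h : ∀ t ∈ S, t < k) :
    wprodS u (insert k S) = wprodS u S * u k := by
  have h' : ∀ t ∈ insert k S, t < k + 1 := by
    intro t ht
    rcases Finset.mem_insert.mp ht with rfl | ht'
    · omega
    · have := h t ht'; omega
  rw [wprodS_eq u (k+1) _ h', wpAux_succ, if_pos (Finset.mem_insert_self k S),
    wpAux_congr u k (insert k S) S
      (fun t ht => by
        constructor
        · intro hmem
          rcases Finset.mem_insert.mp hmem with rfl | h2
          · omega
          · exact h2
        · intro hmem
          exact Finset.mem_insert_of_mem hmem),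
    ← wprodS_eq u k S h]

/-- Additive evaluation of a homomorphism to `Multiplicative ℤ` on `wprodS`. -/
lemma hom_wprodS (ψ : Raag Γ →* Multiplicative ℤ) (S : Finset ℕ) :
    (ψ (wprodS u S)).toAdd = ∑ t ∈ S, (ψ (u t)).toAdd := by
  have key : ∀ m, (ψ (wpAux u m S)).toAdd
      = ∑ t ∈ Finset.range m, (if t ∈ S then (ψ (u t)).toAdd else 0) := by
    intro m
    induction m with
    | zero => simp [wpAux]
    | succ m ih =>
      rw [wpAux_succ, map_mul, toAdd_mul, ih, Finset.sum_range_succ]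
      congr 1
      by_cases hm : m ∈ S
      · rw [if_pos hm, if_pos hm]
      · rw [if_neg hm, if_neg hm, map_one]
        rfl
  rw [wprodS, key]
  rw [← Finset.sum_filter]
  congr 1
  ext t
  simp only [Finset.mem_filter, Finset.mem_range]
  exact ⟨fun h => h.2, fun h => ⟨Nat.lt_succ_of_le (Finset.le_sup (f := id) h), h⟩⟩

/-- The element associated to a tag `(j, e, S)`. -/
def eltT (Γ : SimpleGraph (Fin n)) (u : ℕ → Raag Γ) (j : Fin n) (e : ℤ) (S : Finset ℕ) :
    Raag Γ :=
  (wprodS u S)⁻¹ * Raag.of Γ j ^ e * wprodS u S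

/-- The star associated to a tag. -/
def starT (Γ : SimpleGraph (Fin n)) (u : ℕ → Raag Γ) (j : Fin n) (S : Finset ℕ) : Raag Γ :=
  (wprodS u S)⁻¹ * Raag.of Γ j * wprodS u S

lemma eltT_eq_starT_zpow (j : Fin n) (e : ℤ) (S : Finset ℕ) :
    eltT Γ u j e S = (starT Γ u j S) ^ e := by
  rw [eltT, starT, conj_zpow']

end Words

section Chi

variable {n : ℕ} {Γ : SimpleGraph (Fin n)}

/-- The vertex labels for the Heisenberg homomorphism. -/
def chiF (vj vb : Fin n) : Fin n → Heis :=
  fun v => if v = vj then Heis.X else if v = vb then Heis.Y else 1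

/-- The Heisenberg homomorphism detecting `vb`-content of conjugators of `vj`. -/
def chi (vj vb : Fin n) (hnadj : ¬ Γ.Adj vj vb) : Raag Γ →* Heis :=
  PresentedGroup.toGroup (f := chiF vj vb)
    (by
      rintro r ⟨p, q, hadj, rfl⟩
      rw [map_commutatorElement]
      refine commutatorElement_eq_one_iff_commute.mpr ?_
      simp only [FreeGroup.lift_apply_of]
      have hpq : p ≠ q := hadj.ne
      unfold chiF
      by_cases hp1 : p = vj
      · by_cases hq1 : q = vj
        · exact absurd (hp1.trans hq1.symm) hpq
        · by_cases hq2 : q = vb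
          · exact absurd (hp1 ▸ hq2 ▸ hadj) hnadj
          · rw [if_pos hp1, if_neg hq1, if_neg hq2]
            exact Commute.one_right _
      · by_cases hp2 : p = vb
        · by_cases hq1 : q = vj
          · exact absurd (hq1 ▸ hp2 ▸ hadj.symm) hnadj
          · by_cases hq2 : q = vb
            · exact absurd (hp2.trans hq2.symm) hpq
            · rw [if_neg hq1, if_neg hq2]
              exact Commute.one_right _
        · rw [if_neg hp1, if_neg hp2]
          exact Commute.one_left _)

lemma chi_of (vj vb : Fin n) (hnadj : ¬ Γ.Adj vj vb) (v : Fin n) :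
    chi vj vb hnadj (Raag.of Γ v) = chiF vj vb v :=
  PresentedGroup.toGroup.of _

lemma chi_star (vj vb : Fin n) (hnadj : ¬ Γ.Adj vj vb) (g : Raag Γ) :
    chi vj vb hnadj (g⁻¹ * Raag.of Γ vj * g)
      = ⟨1, 0, (chi vj vb hnadj g).b⟩ := by
  rw [map_mul, map_mul, map_inv, chi_of]
  unfold chiF
  rw [if_pos rfl]
  exact Heis.conj_X _

lemma chi_u_toAdd (vj vb : Fin n) (hnadj : ¬ Γ.Adj vj vb) (hne : vj ≠ vb)
    (c : Fin n) (q : ℤ) :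
    (Heis.π₂ (chi vj vb hnadj (Raag.of Γ c ^ q))).toAdd
      = if c = vb then q else 0 := by
  rw [map_zpow, map_zpow, chi_of]
  unfold chiF
  by_cases hc1 : c = vj
  · rw [if_pos hc1, if_neg (fun h : c = vb => hne (hc1.symm.trans h))]
    · show (Heis.π₂ Heis.X ^ q).toAdd = 0
      rw [Heis.π₂_X, ← ofAdd_zsmul]
      simp
  · rw [if_neg hc1]
    by_cases hc2 : c = vb
    · rw [if_pos hc2, if_pos hc2]
      show (Heis.π₂ Heis.Y ^ q).toAdd = q
      rw [Heis.π₂_Y, ← ofAdd_zsmul]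
      simp
    · rw [if_neg hc2, if_neg hc2, map_one]
      show ((1 : Multiplicative ℤ) ^ q).toAdd = 0
      simp

end Chi

section MainLemmas

variable {n : ℕ} (hn : 0 < n) (Γ : SimpleGraph (Fin n))

lemma expSum_conj (b v : Fin n) (g : Raag Γ) :
    (expSum Γ b (g⁻¹ * Raag.of Γ v * g)).toAdd = if v = b then 1 else 0 := by
  have := expSum_conj_zpow Γ b v g 1
  rwa [zpow_one] at this

/-- Star-level equality forces equal classes. -/
lemma starT_class {u : ℕ → Raag Γ} {j j' : Fin n} {S S' : Finset ℕ}
    (h : starT Γ u j S = starT Γ u j' S') : j = j' := by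
  have h1 := congrArg (fun x => (expSum Γ j x).toAdd) h
  simp only [starT] at h1
  rw [expSum_conj Γ j j, expSum_conj Γ j j', if_pos rfl] at h1
  by_cases hj : j' = j
  · exact hj.symm
  · rw [if_neg hj] at h1
    norm_num at h1

/-- Star-level equality recovers, for every vertex non-adjacent to `j`, the exact set of
indices of that class occurring in the conjugator. -/
lemma starT_filter {u : ℕ → Raag Γ} (hu : ∀ k, u k = Raag.of Γ (classF hn k) ^ qexpF n k)
    {j b : Fin n} (hnadj : ¬ Γ.Adj j b) (hne : j ≠ b) {S S' : Finset ℕ}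
    (h : starT Γ u j S = starT Γ u j S') :
    S.filter (fun t => classF hn t = b) = S'.filter (fun t => classF hn t = b) := by
  classical
  have hchi := congrArg (chi j b hnadj) h
  rw [starT, starT, chi_star j b hnadj, chi_star j b hnadj] at hchi
  have hb : (chi j b hnadj (wprodS u S)).b = (chi j b hnadj (wprodS u S')).b :=
    congrArg Heis.c hchi
  have hval : ∀ S₀ : Finset ℕ, (chi j b hnadj (wprodS u S₀)).b
      = ∑ t ∈ S₀.filter (fun t => classF hn t = b), qexpF n t := by
    intro S₀
    have h1 : (chi j b hnadj (wprodS u S₀)).b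
        = ((Heis.π₂.comp (chi j b hnadj)) (wprodS u S₀)).toAdd := rfl
    have h2 : ∀ t : ℕ, ((Heis.π₂.comp (chi j b hnadj)) (u t)).toAdd
        = if classF hn t = b then qexpF n t else 0 := by
      intro t
      rw [MonoidHom.comp_apply, hu t]
      exact chi_u_toAdd j b hnadj hne _ _
    rw [h1, hom_wprodS]
    rw [Finset.sum_congr rfl (fun t _ => h2 t), ← Finset.sum_filter]
  rw [hval S, hval S'] at hb
  have hinjA : ∀ S₀ : Finset ℕ, ∀ x ∈ S₀.filter (fun t => classF hn t = b),
      ∀ y ∈ S₀.filter (fun t => classF hn t = b), expoF n x = expoF n y → x = y := by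
    intro S₀ x hx y hy hxy
    have hcx : classF hn x = b := (Finset.mem_filter.mp hx).2
    have hcy : classF hn y = b := (Finset.mem_filter.mp hy).2
    exact idx_inj hn (hcx.trans hcy.symm) hxy
  have hsum : ∑ r ∈ (S.filter (fun t => classF hn t = b)).image (expoF n), (-2:ℤ)^r
      = ∑ r ∈ (S'.filter (fun t => classF hn t = b)).image (expoF n), (-2:ℤ)^r := by
    rw [Finset.sum_image (hinjA S), Finset.sum_image (hinjA S')]
    rw [Finset.sum_congr rfl (fun t _ => (qexpF_eq_neg2_pow t).symm),
      Finset.sum_congr rfl (fun t _ => (qexpF_eq_neg2_pow t).symm)]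
    exact hb
  have himg := neg2_sum_injective hsum
  ext t
  simp only [Finset.mem_filter]
  constructor
  · rintro ⟨htS, htc⟩
    have h1 : expoF n t ∈ (S.filter (fun t => classF hn t = b)).image (expoF n) :=
      Finset.mem_image_of_mem _ (Finset.mem_filter.mpr ⟨htS, htc⟩)
    rw [himg] at h1
    obtain ⟨t', ht', hexp⟩ := Finset.mem_image.mp h1
    have hc' : classF hn t' = b := (Finset.mem_filter.mp ht').2
    have : t' = t := idx_inj hn (hc'.trans htc.symm) hexp
    exact this ▸ ⟨(Finset.mem_filter.mp ht').1, hc'⟩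
  · rintro ⟨htS, htc⟩
    have h1 : expoF n t ∈ (S'.filter (fun t => classF hn t = b)).image (expoF n) :=
      Finset.mem_image_of_mem _ (Finset.mem_filter.mpr ⟨htS, htc⟩)
    rw [← himg] at h1
    obtain ⟨t', ht', hexp⟩ := Finset.mem_image.mp h1
    have hc' : classF hn t' = b := (Finset.mem_filter.mp ht').2
    have : t' = t := idx_inj hn (hc'.trans htc.symm) hexp
    exact this ▸ ⟨(Finset.mem_filter.mp ht').1, hc'⟩

end MainLemmas

section TagLayer

variable {n : ℕ} (hn : 0 < n) (Γ : SimpleGraph (Fin n))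

/-- Well-formedness of a tag at time `k`. -/
def TagOK (u : ℕ → Raag Γ) (k : ℕ) (τ : Fin n × ℤ × Finset ℕ) : Prop :=
  (τ.2.2 = ∅ ∧ τ.2.1 = pureE hn k τ.1) ∨
  (∃ hne : τ.2.2.Nonempty, (∀ t ∈ τ.2.2, t < k) ∧
    classF hn (τ.2.2.min' hne) ≠ τ.1 ∧ ¬ Γ.Adj (classF hn (τ.2.2.min' hne)) τ.1 ∧
    τ.2.1 = pureE hn (τ.2.2.min' hne) τ.1)

lemma TagOK.e_ne_zero {u : ℕ → Raag Γ} {k : ℕ} {τ : Fin n × ℤ × Finset ℕ}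
    (h : TagOK hn Γ u k τ) : τ.2.1 ≠ 0 := by
  rcases h with ⟨_, he⟩ | ⟨_, _, _, _, he⟩ <;> rw [he] <;> exact pureE_ne_zero hn _ _

/-- The key injectivity statement at tag level: tags with equal stars represent
equal group elements. -/
lemma starT_inj {u : ℕ → Raag Γ} (hu : ∀ k, u k = Raag.of Γ (classF hn k) ^ qexpF n k)
    {k : ℕ} {τ τ' : Fin n × ℤ × Finset ℕ}
    (hτ : TagOK hn Γ u k τ) (hτ' : TagOK hn Γ u k τ')
    (h : starT Γ u τ.1 τ.2.2 = starT Γ u τ'.1 τ'.2.2) :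
    eltT Γ u τ.1 τ.2.1 τ.2.2 = eltT Γ u τ'.1 τ'.2.1 τ'.2.2 := by
  classical
  obtain ⟨j, e, S⟩ := τ
  obtain ⟨j', e', S'⟩ := τ'
  simp only at h ⊢
  have hj : j = j' := starT_class Γ h
  subst hj
  -- it suffices to show e = e'
  suffices he : e = e' by
    rw [eltT_eq_starT_zpow, eltT_eq_starT_zpow, h, he]
  simp only [TagOK] at hτ hτ'
  -- helper: a nonpure tag cannot have the same star as a pure tag
  have key : ∀ S₀ S₁ : Finset ℕ, starT Γ u j S₀ = starT Γ u j S₁ →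
      ∀ hne : S₁.Nonempty, (classF hn (S₁.min' hne) ≠ j) →
      (¬ Γ.Adj (classF hn (S₁.min' hne)) j) →
      ∃ hne₀ : S₀.Nonempty, S₀.min' hne₀ ≤ S₁.min' hne := by
    intro S₀ S₁ hstar hne hc1 hc2
    set b := classF hn (S₁.min' hne) with hb
    have hnadj : ¬ Γ.Adj j b := fun hadj => hc2 hadj.symm
    have hne' : j ≠ b := fun hjb => hc1 hjb.symm
    have hfil := starT_filter hn Γ hu hnadj hne' hstar
    have hmem : S₁.min' hne ∈ S₁.filter (fun t => classF hn t = b) :=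
      Finset.mem_filter.mpr ⟨Finset.min'_mem _ _, rfl⟩
    rw [← hfil] at hmem
    have hS₀ : S₁.min' hne ∈ S₀ := (Finset.mem_filter.mp hmem).1
    exact ⟨⟨_, hS₀⟩, Finset.min'_le _ _ hS₀⟩
  rcases hτ with ⟨hS, he⟩ | ⟨hne, hbd, hc1, hc2, he⟩
  · rcases hτ' with ⟨hS', he'⟩ | ⟨hne', hbd', hc1', hc2', he'⟩
    · rw [he, he']
    · -- pure vs nonpure: impossible
      obtain ⟨hne₀, _⟩ := key S S' h hne' hc1' hc2'
      rw [hS] at hne₀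
      exact absurd hne₀ (by simp)
  · rcases hτ' with ⟨hS', he'⟩ | ⟨hne', hbd', hc1', hc2', he'⟩
    · obtain ⟨hne₀, _⟩ := key S' S h.symm hne hc1 hc2
      rw [hS'] at hne₀
      exact absurd hne₀ (by simp)
    · obtain ⟨hne₀, hle1⟩ := key S S' h hne' hc1' hc2'
      obtain ⟨hne₀', hle2⟩ := key S' S h.symm hne hc1 hc2
      have hmineq : S.min' hne = S'.min' hne' := by
        have e1 : S.min' hne = S.min' hne₀ := rfl
        have e2 : S'.min' hne' = S'.min' hne₀' := rfl
        omega
      rw [he, he', hmineq]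

variable (u : ℕ → Raag Γ) (st : Raag Γ → Raag Γ)
variable (hst : ∀ (a : Fin n) (m : ℤ) (g : Raag Γ), m ≠ 0 →
      st (g⁻¹ * (Raag.of Γ a) ^ m * g) = g⁻¹ * Raag.of Γ a * g)

include hst

lemma st_eltT {j : Fin n} {e : ℤ} {S : Finset ℕ} (he : e ≠ 0) :
    st (eltT Γ u j e S) = starT Γ u j S :=
  hst j e (wprodS u S) he

lemma st_pure_pow {c : Fin n} {m : ℤ} (hm : m ≠ 0) :
    st (Raag.of Γ c ^ m) = Raag.of Γ c := by
  have := hst c m 1 hm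
  simpa using this

/-- Equality between representations forces equality of stars. -/
lemma star_welldef {a b : Fin n} {m l : ℤ} {g h : Raag Γ} (hm : m ≠ 0) (hl : l ≠ 0)
    (heq : g⁻¹ * Raag.of Γ a ^ m * g = h⁻¹ * Raag.of Γ b ^ l * h) :
    g⁻¹ * Raag.of Γ a * g = h⁻¹ * Raag.of Γ b * h := by
  rw [← hst a m g hm, ← hst b l h hl, heq]

/-- If a power of a conjugate of a generator commutes with `y`, so does the conjugate itself. -/
lemma commute_star_of_commute {a : Fin n} {m : ℤ} {g y : Raag Γ} (hm : m ≠ 0)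
    (hc : Commute (g⁻¹ * Raag.of Γ a ^ m * g) y) :
    Commute (g⁻¹ * Raag.of Γ a * g) y := by
  have h1 : (g * y)⁻¹ * Raag.of Γ a ^ m * (g * y) = g⁻¹ * Raag.of Γ a ^ m * g := by
    have := hc.eq
    rw [mul_inv_rev]
    calc y⁻¹ * g⁻¹ * Raag.of Γ a ^ m * (g * y)
        = y⁻¹ * (g⁻¹ * Raag.of Γ a ^ m * g * y) := by group
      _ = y⁻¹ * (y * (g⁻¹ * Raag.of Γ a ^ m * g)) := by rw [← this]
      _ = g⁻¹ * Raag.of Γ a ^ m * g := by group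
  have h2 := star_welldef Γ st hst hm hm h1
  rw [mul_inv_rev] at h2
  have h4 : (g⁻¹ * Raag.of Γ a * g) * y = y * (g⁻¹ * Raag.of Γ a * g) := by
    have h3 : (g⁻¹ * Raag.of Γ a * g) * y
        = y * (y⁻¹ * g⁻¹ * Raag.of Γ a * (g * y)) := by group
    rw [h2] at h3
    exact h3
  exact h4

end TagLayer

section TagLayer2

variable {n : ℕ} (hn : 0 < n) (Γ : SimpleGraph (Fin n))
variable (u : ℕ → Raag Γ) (st : Raag Γ → Raag Γ)
variable (hst : ∀ (a : Fin n) (m : ℤ) (g : Raag Γ), m ≠ 0 →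
      st (g⁻¹ * (Raag.of Γ a) ^ m * g) = g⁻¹ * Raag.of Γ a * g)

include hst

/-- Powers of conjugates of generators commute iff the conjugates do. -/
lemma commute_iff_star {a b : Fin n} {m l : ℤ} {g h : Raag Γ} (hm : m ≠ 0) (hl : l ≠ 0) :
    Commute (g⁻¹ * Raag.of Γ a ^ m * g) (h⁻¹ * Raag.of Γ b ^ l * h)
      ↔ Commute (g⁻¹ * Raag.of Γ a * g) (h⁻¹ * Raag.of Γ b * h) := by
  constructor
  · intro hc
    have h1 : Commute (g⁻¹ * Raag.of Γ a * g) (h⁻¹ * Raag.of Γ b ^ l * h) :=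
      commute_star_of_commute Γ st hst hm hc
    exact (commute_star_of_commute Γ st hst hl h1.symm).symm
  · intro hc
    have h1 : Commute (g⁻¹ * Raag.of Γ a ^ m * g) (h⁻¹ * Raag.of Γ b ^ l * h) := by
      rw [← conj_zpow', ← conj_zpow']
      exact (hc.zpow_left m).zpow_right l
    exact h1

omit hst

lemma starT_pure (j : Fin n) : starT Γ u j ∅ = Raag.of Γ j := by
  rw [starT, wprodS_empty]
  group

lemma eltT_pure (j : Fin n) (e : ℤ) : eltT Γ u j e ∅ = Raag.of Γ j ^ e := by
  rw [eltT, wprodS_empty]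
  group

include hst

/-- A well-formed tag representing a pure power must be the pure tag. -/
lemma eltT_pure_power (hu : ∀ k, u k = Raag.of Γ (classF hn k) ^ qexpF n k)
    {k : ℕ} {τ : Fin n × ℤ × Finset ℕ} (hτ : TagOK hn Γ u k τ)
    {c : Fin n} {m : ℤ} (hm : m ≠ 0)
    (h : eltT Γ u τ.1 τ.2.1 τ.2.2 = Raag.of Γ c ^ m) :
    τ.1 = c ∧ τ.2.1 = m ∧ τ.2.2 = ∅ := by
  classical
  obtain ⟨j, e, S⟩ := τ
  simp only at h ⊢
  have he : e ≠ 0 := hτ.e_ne_zero hn Γ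
  have hstar : starT Γ u j S = starT Γ u c ∅ := by
    rw [starT_pure]
    have h2 : (wprodS u S)⁻¹ * Raag.of Γ j ^ e * wprodS u S
        = (1:Raag Γ)⁻¹ * Raag.of Γ c ^ m * 1 := by
      rw [eltT] at h
      simpa using h
    have := star_welldef Γ st hst he hm h2
    rw [starT]
    simpa using this
  have hj : j = c := starT_class Γ hstar
  subst hj
  have hS : S = ∅ := by
    by_contra hSne
    rcases hτ with ⟨hS0, _⟩ | ⟨hne, _, hc1, hc2, _⟩
    · exact hSne hS0
    · set b := classF hn (S.min' hne) with hb
      have hnadj : ¬ Γ.Adj j b := fun hadj => hc2 hadj.symm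
      have hne' : j ≠ b := fun hjb => hc1 hjb.symm
      have hfil := starT_filter hn Γ hu hnadj hne' hstar
      have hmem : S.min' hne ∈ S.filter (fun t => classF hn t = b) :=
        Finset.mem_filter.mpr ⟨Finset.min'_mem _ _, rfl⟩
      rw [hfil] at hmem
      simp at hmem
  subst hS
  refine ⟨rfl, ?_, rfl⟩
  rw [eltT_pure] at h
  have h1 := congrArg (fun x => (expSum Γ j x).toAdd) h
  have h2 : ∀ l : ℤ, (expSum Γ j (Raag.of Γ j ^ l)).toAdd = l := by
    intro l
    have := expSum_conj_zpow Γ j j 1 l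
    rw [if_pos rfl] at this
    simpa using this
  rw [h2, h2] at h1
  exact h1

omit hst

lemma min'_insert_top {k : ℕ} {S : Finset ℕ} (hS : S.Nonempty) (hbd : ∀ t ∈ S, t < k) :
    (insert k S).min' (Finset.insert_nonempty _ _) = S.min' hS := by
  apply le_antisymm
  · exact Finset.min'_le _ _ (Finset.mem_insert_of_mem (Finset.min'_mem _ _))
  · apply Finset.le_min'
    intro y hy
    rcases Finset.mem_insert.mp hy with rfl | hy'
    · have := hbd _ (Finset.min'_mem S hS)
      omega
    · exact Finset.min'_le _ _ hy'

lemma conj_eltT {k : ℕ} {j : Fin n} {e : ℤ} {S : Finset ℕ} (hbd : ∀ t ∈ S, t < k) :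
    (u k)⁻¹ * eltT Γ u j e S * u k = eltT Γ u j e (insert k S) := by
  rw [eltT, eltT, wprodS_insert u k S hbd]
  group

lemma conj_eltT_comm (hu : ∀ k, u k = Raag.of Γ (classF hn k) ^ qexpF n k)
    {k : ℕ} {j : Fin n} {e : ℤ} (hcomm : classF hn k = j ∨ Γ.Adj (classF hn k) j) :
    (u k)⁻¹ * eltT Γ u j e ∅ * u k = eltT Γ u j e ∅ := by
  have hc : Commute (u k) (eltT Γ u j e ∅) := by
    rw [eltT_pure, hu k]
    rcases hcomm with h | h
    · rw [h]
      exact (Commute.refl _).zpow_zpow _ _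
    · exact ((raag_adj_commute Γ h).zpow_zpow _ _)
  calc (u k)⁻¹ * eltT Γ u j e ∅ * u k
      = (u k)⁻¹ * (eltT Γ u j e ∅ * u k) := by group
    _ = (u k)⁻¹ * (u k * eltT Γ u j e ∅) := by rw [← hc.eq]
    _ = eltT Γ u j e ∅ := by group

end TagLayer2

section Induction

variable {n : ℕ} (hn : 0 < n) (Γ : SimpleGraph (Fin n))
variable (u : ℕ → Raag Γ) (st : Raag Γ → Raag Γ)

/-- The group element represented by a tag. -/
def tagElt : (Fin n × ℤ × Finset ℕ) → Raag Γ := fun τ => eltT Γ u τ.1 τ.2.1 τ.2.2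

/-- A good tag set at time `k`. -/
def Good (k : ℕ) (T : Set (Fin n × ℤ × Finset ℕ)) : Prop :=
  (∀ τ ∈ T, TagOK hn Γ u k τ) ∧ ∀ j : Fin n, (j, pureE hn k j, ∅) ∈ T

lemma TagOK.bounds {u : ℕ → Raag Γ} {k : ℕ} {τ : Fin n × ℤ × Finset ℕ}
    (h : TagOK hn Γ u k τ) : ∀ t ∈ τ.2.2, t < k := by
  rcases h with ⟨hS, _⟩ | ⟨_, hbd, _⟩
  · rw [hS]; simp
  · exact hbd

lemma TagOK_of_succ {u : ℕ → Raag Γ} {k : ℕ} {τ : Fin n × ℤ × Finset ℕ}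
    (h : TagOK hn Γ u k τ) (hne : τ ≠ (classF hn k, qexpF n k, ∅)) :
    TagOK hn Γ u (k + 1) τ := by
  obtain ⟨j, e, S⟩ := τ
  rcases h with ⟨hS, he⟩ | ⟨hne', hbd, hc1, hc2, he⟩
  · simp only at hS he
    subst hS
    have hjc : classF hn k ≠ j := by
      intro hjc
      apply hne
      have : e = qexpF n k := by rw [he, ← hjc, pureE_self hn rfl]
      rw [this, ← hjc]
    exact Or.inl ⟨rfl, by rw [he, pureE_succ_other hn hjc]⟩
  · exact Or.inr ⟨hne', fun t ht => Nat.lt_succ_of_lt (hbd t ht), hc1, hc2, he⟩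

lemma TagOK_insert {u : ℕ → Raag Γ} {k : ℕ} {τ : Fin n × ℤ × Finset ℕ}
    (h : TagOK hn Γ u k τ)
    (hcond : τ.2.2.Nonempty ∨ (classF hn k ≠ τ.1 ∧ ¬ Γ.Adj (classF hn k) τ.1)) :
    TagOK hn Γ u (k + 1) (τ.1, τ.2.1, insert k τ.2.2) := by
  obtain ⟨j, e, S⟩ := τ
  simp only at hcond ⊢
  rcases Finset.eq_empty_or_nonempty S with hS | hSne
  · subst hS
    have hcond' : classF hn k ≠ j ∧ ¬ Γ.Adj (classF hn k) j := by
      rcases hcond with h' | h'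
      · exact absurd h' (by simp)
      · exact h'
    have he : e = pureE hn k j := by
      rcases h with ⟨_, he⟩ | ⟨hne', _⟩
      · exact he
      · exact absurd hne' (by simp)
    refine Or.inr ⟨⟨k, Finset.mem_insert_self _ _⟩, ?_, ?_⟩
    · intro t ht
      rcases Finset.mem_insert.mp ht with rfl | ht'
      · omega
      · simp at ht'
    · have hmin : (insert k (∅ : Finset ℕ)).min' ⟨k, Finset.mem_insert_self _ _⟩ = k := by
        simp
      rw [hmin]
      exact ⟨hcond'.1, hcond'.2, he⟩
  · have hbd := TagOK.bounds hn Γ h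
    simp only at hbd
    have hmin : (insert k S).min' (Finset.insert_nonempty _ _) = S.min' hSne :=
      min'_insert_top hSne hbd
    rcases h with ⟨hS, _⟩ | ⟨hne', hbd', hc1, hc2, he⟩
    · simp only at hS
      rw [hS] at hSne
      exact absurd hSne (by simp)
    · refine Or.inr ⟨Finset.insert_nonempty _ _, ?_, ?_⟩
      · intro t ht
        rcases Finset.mem_insert.mp ht with rfl | ht'
        · omega
        · have := hbd' t ht'; omega
      · have hpi : (insert k S).min' (Finset.insert_nonempty _ _) = S.min' hne' := by
          rw [hmin]
        rw [hpi]
        exact ⟨hc1, hc2, he⟩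

end Induction

section BigStep

variable {n : ℕ} (hn : 0 < n) (Γ : SimpleGraph (Fin n))
variable (u : ℕ → Raag Γ) (st : Raag Γ → Raag Γ)
variable (hst : ∀ (a : Fin n) (m : ℤ) (g : Raag Γ), m ≠ 0 →
      st (g⁻¹ * (Raag.of Γ a) ^ m * g) = g⁻¹ * Raag.of Γ a * g)

lemma good_zero :
    ∃ T, Good hn Γ u 0 T ∧ Set.range (Raag.of Γ) = tagElt Γ u '' T := by
  refine ⟨{τ | ∃ j : Fin n, τ = (j, 1, ∅)}, ⟨?_, ?_⟩, ?_⟩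
  · rintro τ ⟨j, rfl⟩
    exact Or.inl ⟨rfl, by simp [pureE_zero hn]⟩
  · intro j
    exact ⟨j, by rw [pureE_zero hn]⟩
  · ext x
    simp only [Set.mem_range, Set.mem_image, Set.mem_setOf_eq]
    constructor
    · rintro ⟨j, rfl⟩
      exact ⟨(j, 1, ∅), ⟨j, rfl⟩, by simp [tagElt, eltT_pure]⟩
    · rintro ⟨τ, ⟨j, rfl⟩, rfl⟩
      exact ⟨j, by simp [tagElt, eltT_pure]⟩

include hst

lemma good_succ (hu : ∀ k, u k = Raag.of Γ (classF hn k) ^ qexpF n k)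
    (k : ℕ) (T : Set (Fin n × ℤ × Finset ℕ)) (hG : Good hn Γ u k T) :
    ∃ T', Good hn Γ u (k + 1) T' ∧
      symmDiff ((tagElt Γ u '' T) ∪ (fun x => (u k)⁻¹ * x * u k) '' (tagElt Γ u '' T))
        {u k, u k ^ (-2 : ℤ)} = tagElt Γ u '' T' := by
  classical
  obtain ⟨hOK, hpure⟩ := hG
  have huk : u k = Raag.of Γ (classF hn k) ^ qexpF n k := hu k
  have hq0 : qexpF n k ≠ 0 := qexpF_ne_zero k
  have hq20 : -2 * qexpF n k ≠ 0 := by omega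
  have hqne : qexpF n k ≠ -2 * qexpF n k := by omega
  have hpureq : pureE hn k (classF hn k) = qexpF n k := pureE_self hn rfl
  have hukpow : u k ^ (-2 : ℤ) = Raag.of Γ (classF hn k) ^ (-2 * qexpF n k) := by
    rw [huk, ← zpow_mul]
    congr 1
    ring
  have hukelt : u k = tagElt Γ u (classF hn k, qexpF n k, ∅) := by
    rw [tagElt]
    simp only
    rw [eltT_pure, huk]
  have huk2elt : u k ^ (-2 : ℤ) = tagElt Γ u (classF hn k, -2 * qexpF n k, ∅) := by
    rw [tagElt]
    simp only
    rw [eltT_pure, hukpow]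
  -- no well-formed tag at any time maps to u k ^ (-2)
  have hnot2 : ∀ k' τ, TagOK hn Γ u k' τ → (τ.2.2 = ∅ → τ.2.1 = qexpF n k) →
      tagElt Γ u τ ≠ u k ^ (-2 : ℤ) := by
    intro k' τ hτOK hτe heq
    rw [hukpow] at heq
    obtain ⟨hj, he, hS⟩ := eltT_pure_power hn Γ u st hst hu hτOK hq20 heq
    rw [hτe hS] at he
    exact hqne he
  -- tags in `T` with `τ.2.2 = ∅` mapping to pure powers have the pure exponent
  have hTpure : ∀ τ ∈ T, τ.2.2 = ∅ → τ.1 = classF hn k → τ.2.1 = qexpF n k := by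
    intro τ hτ hS hj
    rcases hOK τ hτ with ⟨_, he⟩ | ⟨hne', _⟩
    · rw [he, hj, hpureq]
    · rw [hS] at hne'
      exact absurd hne' (by simp)
  -- only the distinguished tag maps to `u k`
  have huniq : ∀ τ, TagOK hn Γ u k τ → tagElt Γ u τ = u k →
      τ = (classF hn k, qexpF n k, ∅) := by
    intro τ hτOK heq
    rw [huk] at heq
    obtain ⟨hj, he, hS⟩ := eltT_pure_power hn Γ u st hst hu hτOK hq0 heq
    obtain ⟨j, e, S⟩ := τ
    simp only at hj he hS
    rw [hj, he, hS]
  -- u k ^ (-2) is not in the union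
  have hnotin2 : u k ^ (-2 : ℤ) ∉
      (tagElt Γ u '' T) ∪ (fun x => (u k)⁻¹ * x * u k) '' (tagElt Γ u '' T) := by
    rintro (⟨τ, hτ, heq⟩ | ⟨y, ⟨τ, hτ, rfl⟩, heq⟩)
    · exact hnot2 k τ (hOK τ hτ) (fun hS => hTpure τ hτ hS (by
        -- class must be classF hn k
        rw [hukpow] at heq
        exact (eltT_pure_power hn Γ u st hst hu (hOK τ hτ) hq20 heq).1)) heq
    · have hy : tagElt Γ u τ = u k ^ (-2 : ℤ) := by
        have hcomm : u k * u k ^ (-2 : ℤ) * (u k)⁻¹ = u k ^ (-2 : ℤ) := by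
          have hc : Commute (u k) (u k ^ (-2 : ℤ)) := (Commute.refl _).zpow_right _
          calc u k * u k ^ (-2 : ℤ) * (u k)⁻¹ = u k ^ (-2 : ℤ) * u k * (u k)⁻¹ := by
                rw [hc.eq]
            _ = u k ^ (-2 : ℤ) := by group
        have := congrArg (fun z => u k * z * (u k)⁻¹) heq
        simp only at this
        rw [hcomm] at this
        calc tagElt Γ u τ = u k * ((u k)⁻¹ * tagElt Γ u τ * u k) * (u k)⁻¹ := by group
          _ = u k ^ (-2 : ℤ) := this
      exact hnot2 k τ (hOK τ hτ) (fun hS => hTpure τ hτ hS (by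
        rw [hukpow] at hy
        exact (eltT_pure_power hn Γ u st hst hu (hOK τ hτ) hq20 hy).1)) hy
  -- the new tag set
  refine ⟨{τ | τ ∈ T ∧ τ ≠ (classF hn k, qexpF n k, ∅)} ∪ {(classF hn k, -2 * qexpF n k, ∅)}
    ∪ {τ' | ∃ τ ∈ T, (τ.2.2.Nonempty ∨ (classF hn k ≠ τ.1 ∧ ¬ Γ.Adj (classF hn k) τ.1)) ∧
        τ' = (τ.1, τ.2.1, insert k τ.2.2)}, ⟨?_, ?_⟩, ?_⟩
  · -- all tags are OK at time k+1
    rintro τ ((⟨hτT, hτne⟩ | hτnew) | ⟨τ₀, hτ₀, hcond, rfl⟩)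
    · exact TagOK_of_succ hn Γ (hOK τ hτT) hτne
    · rw [Set.mem_singleton_iff] at hτnew
      subst hτnew
      exact Or.inl ⟨rfl, by rw [pureE_succ_self hn]⟩
    · exact TagOK_insert hn Γ (hOK τ₀ hτ₀) hcond
  · -- pure tags are present
    intro j
    by_cases hj : j = classF hn k
    · subst hj
      rw [pureE_succ_self hn]
      left; right
      rfl
    · left; left
      constructor
      · rw [pureE_succ_other hn (fun h => hj h.symm)]
        exact hpure j
      · intro hc
        have := congrArg Prod.fst hc
        simp only at this
        exact hj this
  · -- the set equation
    ext x
    rw [Set.mem_symmDiff]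
    constructor
    · rintro (⟨hin, hnotD⟩ | ⟨hinD, hnotin⟩)
      · rcases hin with ⟨τ, hτ, rfl⟩ | ⟨y, ⟨τ, hτ, rfl⟩, rfl⟩
        · -- x ∈ A
          by_cases hτc : τ = (classF hn k, qexpF n k, ∅)
          · exfalso
            apply hnotD
            rw [hτc, ← hukelt]
            exact Set.mem_insert _ _
          · exact ⟨τ, Or.inl (Or.inl ⟨hτ, hτc⟩), rfl⟩
        · -- x ∈ B
          by_cases hcond : τ.2.2.Nonempty ∨ (classF hn k ≠ τ.1 ∧ ¬ Γ.Adj (classF hn k) τ.1)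
          · refine ⟨(τ.1, τ.2.1, insert k τ.2.2), Or.inr ⟨τ, hτ, hcond, rfl⟩, ?_⟩
            rw [tagElt]
            simp only
            rw [← conj_eltT Γ u (TagOK.bounds hn Γ (hOK τ hτ))]
            rfl
          · push_neg at hcond
            obtain ⟨hS, hcomm⟩ := hcond
            obtain ⟨j, e, S⟩ := τ
            simp only at hS hcomm
            subst hS
            have hcomm' : classF hn k = j ∨ Γ.Adj (classF hn k) j := by
              by_cases h1 : classF hn k = j
              · exact Or.inl h1
              · exact Or.inr (hcomm h1)
            have hfix : (fun x => (u k)⁻¹ * x * u k) (tagElt Γ u (j, e, ∅))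
                = tagElt Γ u (j, e, ∅) := by
              show (u k)⁻¹ * eltT Γ u j e ∅ * u k = eltT Γ u j e ∅
              exact conj_eltT_comm hn Γ u hu hcomm'
            rw [hfix]
            by_cases hτc : ((j, e, ∅) : Fin n × ℤ × Finset ℕ) = (classF hn k, qexpF n k, ∅)
            · exfalso
              apply hnotD
              rw [hfix, hτc, ← hukelt]
              exact Set.mem_insert _ _
            · exact ⟨(j, e, ∅), Or.inl (Or.inl ⟨hτ, hτc⟩), rfl⟩
      · -- x ∈ D, x ∉ A ∪ B
        have hmemT : (classF hn k, qexpF n k, ∅) ∈ T := by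
          rw [← hpureq]
          exact hpure _
        rcases Set.mem_insert_iff.mp hinD with rfl | hx2
        · exfalso
          apply hnotin
          left
          exact ⟨(classF hn k, qexpF n k, ∅), hmemT, hukelt.symm⟩
        · rw [Set.mem_singleton_iff] at hx2
          subst hx2
          exact ⟨(classF hn k, -2 * qexpF n k, ∅), Or.inl (Or.inr rfl), huk2elt.symm⟩
    · rintro ⟨τ, ((⟨hτT, hτne⟩ | hτnew) | ⟨τ₀, hτ₀, hcond, rfl⟩), rfl⟩
      · -- old tag
        left
        constructor
        · left; exact ⟨τ, hτT, rfl⟩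
        · intro hD
          rcases Set.mem_insert_iff.mp hD with heq | heq
          · exact hτne (huniq τ (hOK τ hτT) heq)
          · rw [Set.mem_singleton_iff] at heq
            exact hnot2 k τ (hOK τ hτT) (fun hS => hTpure τ hτT hS (by
              rw [hukpow] at heq
              exact (eltT_pure_power hn Γ u st hst hu (hOK τ hτT) hq20 heq).1)) heq
      · -- the new pure tag
        rw [Set.mem_singleton_iff] at hτnew
        subst hτnew
        right
        constructor
        · right
          rw [← huk2elt]
          rfl
        · rw [← huk2elt]
          exact hnotin2
      · -- insert tag
        left
        have hbd := TagOK.bounds hn Γ (hOK τ₀ hτ₀)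
        have hx : tagElt Γ u (τ₀.1, τ₀.2.1, insert k τ₀.2.2)
            = (u k)⁻¹ * tagElt Γ u τ₀ * u k := by
          rw [tagElt, tagElt]
          simp only
          rw [← conj_eltT Γ u hbd]
        constructor
        · right
          exact ⟨tagElt Γ u τ₀, ⟨τ₀, hτ₀, rfl⟩, hx.symm⟩
        · intro hD
          rcases Set.mem_insert_iff.mp hD with heq | heq
          · have hOK' := TagOK_insert hn Γ (hOK τ₀ hτ₀) hcond
            rw [huk] at heq
            obtain ⟨_, _, hS⟩ := eltT_pure_power hn Γ u st hst hu hOK' hq0 heq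
            simp only at hS
            exact absurd hS (by simp)
          · rw [Set.mem_singleton_iff] at heq
            have hOK' := TagOK_insert hn Γ (hOK τ₀ hτ₀) hcond
            rw [hukpow] at heq
            obtain ⟨_, _, hS⟩ := eltT_pure_power hn Γ u st hst hu hOK' hq20 heq
            simp only at hS
            exact absurd hS (by simp)

end BigStep

/-- the map `x ↦ x*` (sending `(a^m)^g` to `a^g`) is injective on each `U_k`
and induces a graph isomorphism from `CG(U_k)` onto the induced subgraph of the extension
graph `Γ^e` on `U_k*` (the latter being the commutation graph of `U_k*`). -/
theorem useq_star_injOn_iso {n : ℕ} (hn : 0 < n) (Γ : SimpleGraph (Fin n))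
    (u : ℕ → Raag Γ) (U : ℕ → Set (Raag Γ))
    (huU : IsUniversalSequence Γ u U)
    (st : Raag Γ → Raag Γ)
    (hst : ∀ (a : Fin n) (m : ℤ) (g : Raag Γ), m ≠ 0 →
      st (g⁻¹ * (Raag.of Γ a) ^ m * g) = g⁻¹ * Raag.of Γ a * g) :
    ∀ k, Set.InjOn st (U k) ∧
      ∃ φ : commGraph (Raag Γ) (U k) ≃g commGraph (Raag Γ) (st '' U k),
        ∀ x : U k, (φ x : Raag Γ) = st x := by
  obtain ⟨hu1, hu2, hU0, hrec⟩ := huU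
  -- the universal sequence in terms of `classF` and `qexpF`
  have hu : ∀ k, u k = Raag.of Γ (classF hn k) ^ qexpF n k := by
    intro k
    have hdec := decompF hn k
    rcases Nat.even_or_odd k with he | ho
    · have h2 : k % 2 = 0 := Nat.even_iff.mp he
      have hval := hu1 (iF n k) (classF hn k)
      have hidx : 2 * n * iF n k + 2 * ((classF hn k : Fin n) : ℕ) = k := by
        have h3 : 2 * n * iF n k + 2 * ((classF hn k : Fin n) : ℕ)
            = 2 * (n * iF n k + ((classF hn k : Fin n) : ℕ)) := by ring
        omega
      rw [hidx] at hval
      rw [hval]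
      unfold qexpF
      rw [if_pos h2]
    · have h2 : k % 2 = 1 := Nat.odd_iff.mp ho
      have hval := hu2 (iF n k) (classF hn k)
      have hidx : 2 * n * iF n k + 2 * ((classF hn k : Fin n) : ℕ) + 1 = k := by
        have h3 : 2 * n * iF n k + 2 * ((classF hn k : Fin n) : ℕ)
            = 2 * (n * iF n k + ((classF hn k : Fin n) : ℕ)) := by ring
        omega
      rw [hidx] at hval
      rw [hval]
      unfold qexpF
      rw [if_neg (by omega)]
  -- the invariant
  have hInv : ∀ k, ∃ T, Good hn Γ u k T ∧ U k = tagElt Γ u '' T := by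
    intro k
    induction k with
    | zero =>
      obtain ⟨T, hG, him⟩ := good_zero hn Γ u
      exact ⟨T, hG, by rw [hU0, him]⟩
    | succ k ih =>
      obtain ⟨T, hG, him⟩ := ih
      obtain ⟨T', hG', him'⟩ := good_succ hn Γ u st hst hu k T hG
      refine ⟨T', hG', ?_⟩
      rw [hrec k, him, ← him']
  intro k
  obtain ⟨T, ⟨hOK, hpure⟩, him⟩ := hInv k
  have hrep : ∀ x ∈ U k, ∃ τ ∈ T, x = tagElt Γ u τ := by
    rw [him]
    rintro x ⟨τ, hτ, rfl⟩
    exact ⟨τ, hτ, rfl⟩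
  have hstx : ∀ τ ∈ T, st (tagElt Γ u τ) = starT Γ u τ.1 τ.2.2 := fun τ hτ =>
    st_eltT Γ u st hst ((hOK τ hτ).e_ne_zero hn Γ)
  have hinj : Set.InjOn st (U k) := by
    intro x hx y hy hxy
    obtain ⟨τ, hτ, rfl⟩ := hrep x hx
    obtain ⟨τ', hτ', rfl⟩ := hrep y hy
    rw [hstx τ hτ, hstx τ' hτ'] at hxy
    exact starT_inj hn Γ hu (hOK τ hτ) (hOK τ' hτ') hxy
  refine ⟨hinj, ?_⟩
  have hcomm : ∀ x ∈ U k, ∀ y ∈ U k, (Commute (st x) (st y) ↔ Commute x y) := by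
    intro x hx y hy
    obtain ⟨τ, hτ, rfl⟩ := hrep x hx
    obtain ⟨τ', hτ', rfl⟩ := hrep y hy
    rw [hstx τ hτ, hstx τ' hτ']
    have h1 := commute_iff_star Γ st hst
      (a := τ.1) (b := τ'.1) (m := τ.2.1) (l := τ'.2.1)
      (g := wprodS u τ.2.2) (h := wprodS u τ'.2.2)
      ((hOK τ hτ).e_ne_zero hn Γ) ((hOK τ' hτ').e_ne_zero hn Γ)
    exact h1.symm
  let e : (U k : Set (Raag Γ)) ≃ (st '' U k : Set (Raag Γ)) :=
    Equiv.Set.imageOfInjOn st (U k) hinj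
  refine ⟨⟨e, ?_⟩, fun x => rfl⟩
  intro a b
  show (e a ≠ e b
      ∧ Commute (st a.1) (st b.1)) ↔ (a ≠ b ∧ Commute a.1 b.1)
  constructor
  · rintro ⟨hne, hc⟩
    refine ⟨?_, (hcomm a.1 a.2 b.1 b.2).mp hc⟩
    intro hab
    exact hne (by rw [hab])
  · rintro ⟨hne, hc⟩
    refine ⟨?_, (hcomm a.1 a.2 b.1 b.2).mpr hc⟩
    intro hab
    apply hne
    have hval : st a.1 = st b.1 := congrArg Subtype.val hab
    exact Subtype.ext (hinj a.2 b.2 hval)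
end

section
/- If w = s₁^{e₁}⋯s_ℓ^{e_ℓ} is a canonical expression for w ∈ B(M) ⊆ A(Γ), and σ(w) = s₁^{N₁}⋯s_ℓ^{N_ℓ} with Nᵢ = ((3eᵢ−1)/2)·4^{M−1−fᵢ}, then the sequence (s₁^{N₁}, …, s_ℓ^{N_ℓ}) is a subsequence of the universal sequence (u_k)_{k≥0} defined by u_{2ni+2j} = a_j^{4^i}, u_{2ni+2j+1} = a_j^{-2·4^i}. -/
open scoped commutatorElement

lemma wprod_cons {α : Type*} (Γ : SimpleGraph α) (p : α × Bool) (t : List (α × Bool)) :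
    wprod Γ (p :: t) = wprod Γ [p] * wprod Γ t := by
  simp [wprod]

lemma wordLength_wprod_le {α : Type*} (Γ : SimpleGraph α) (l : List (α × Bool)) :
    wordLength Γ (wprod Γ l) ≤ l.length :=
  Nat.sInf_le ⟨l, rfl, rfl⟩

lemma rcv_le {α : Type*} (Γ : SimpleGraph α) (l : List (α × Bool)) (i : Fin l.length) :
    rcv Γ l i ≤ l.length - (i + 1) := by
  have hdrop : l.drop i = l.get i :: l.drop (i + 1) := by
    rw [List.drop_eq_getElem_cons i.isLt]
    rfl
  have hmem : wordLength Γ (wprod Γ (l.drop (i + 1))) ∈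
      {m | ∃ x y : Raag Γ,
        x ∈ Subgroup.closure (Raag.of Γ '' linkSet Γ (l.get i).1) ∧
        wordLength Γ y = m ∧
        wprod Γ (l.drop i) = x * wprod Γ [l.get i] * y} := by
    refine ⟨1, wprod Γ (l.drop (i + 1)), one_mem _, rfl, ?_⟩
    rw [hdrop, wprod_cons, one_mul]
  calc rcv Γ l i ≤ wordLength Γ (wprod Γ (l.drop (i + 1))) := Nat.sInf_le hmem
    _ ≤ (l.drop (i + 1)).length := wordLength_wprod_le Γ _
    _ = l.length - (i + 1) := by simp

/-- if `l` is a canonical expression for `w ∈ B(M)`, then the sequence of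
inflated letters `(s₁^{N₁}, …, s_ℓ^{N_ℓ})` of `σ(w)` is a subsequence of the universal
sequence `(u_k)`. -/
theorem sigma_letters_subsequence {n : ℕ} (hn : 0 < n) (Γ : SimpleGraph (Fin n))
    (u : ℕ → Raag Γ)
    (hu1 : ∀ (i : ℕ) (j : Fin n),
      u (2 * n * i + 2 * (j : ℕ)) = (Raag.of Γ j) ^ ((4 : ℤ) ^ i))
    (hu2 : ∀ (i : ℕ) (j : Fin n),
      u (2 * n * i + 2 * (j : ℕ) + 1) = (Raag.of Γ j) ^ (-(2 * (4 : ℤ) ^ i)))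
    (M : ℕ) (hM : 0 < M) (l : List (Fin n × Bool))
    (hred : WordReduced Γ l) (hlen : l.length ≤ M)
    (hA : ∀ i j : Fin l.length, i < j → rcv Γ l j ≤ rcv Γ l i)
    (hB : ∀ i j : Fin l.length, i < j → rcv Γ l i = rcv Γ l j →
      (l.get i).1 < (l.get j).1 ∧
        Commute (Raag.of Γ (l.get i).1) (Raag.of Γ (l.get j).1)) :
    ∃ κ : Fin l.length → ℕ, StrictMono κ ∧
      ∀ i : Fin l.length, (Raag.of Γ (l.get i).1) ^ (sigmaExp Γ M l i) = u (κ i) := by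
  have hrcv : ∀ i : Fin l.length, rcv Γ l i ≤ M - 1 := by
    intro i
    have h1 := rcv_le Γ l i
    omega
  refine ⟨fun i => 2 * n * (M - 1 - rcv Γ l i) + 2 * ((l.get i).1 : ℕ) +
    (if (l.get i).2 then 0 else 1), ?_, ?_⟩
  · intro i j hij
    simp only
    have hri := hrcv i
    have hrj := hrcv j
    have hle : rcv Γ l j ≤ rcv Γ l i := hA i j hij
    have hbi : ((l.get i).1 : ℕ) < n := (l.get i).1.isLt
    have hbj : ((l.get j).1 : ℕ) < n := (l.get j).1.isLt
    rcases lt_or_eq_of_le hle with hlt | heq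
    · have haij : M - 1 - rcv Γ l i + 1 ≤ M - 1 - rcv Γ l j := by omega
      have h2 : 2 * n * (M - 1 - rcv Γ l i + 1) ≤ 2 * n * (M - 1 - rcv Γ l j) :=
        Nat.mul_le_mul_left _ haij
      rw [Nat.mul_add, Nat.mul_one] at h2
      split_ifs <;> omega
    · have hlt2 : ((l.get i).1 : ℕ) < ((l.get j).1 : ℕ) := (hB i j hij heq.symm).1
      rw [heq]
      split_ifs <;> omega
  · intro i
    by_cases h : (l.get i).2
    · simp only [sigmaExp, h, if_true, add_zero]
      exact (hu1 (M - 1 - rcv Γ l i) (l.get i).1).symm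
    · simp only [sigmaExp, h, Bool.false_eq_true, if_false]
      rw [show (-2 : ℤ) * 4 ^ (M - 1 - rcv Γ l i) = -(2 * 4 ^ (M - 1 - rcv Γ l i)) by ring]
      exact (hu2 (M - 1 - rcv Γ l i) (l.get i).1).symm
end

section
/- Let Γ be a finite graph, x, y ∈ A(Γ), and write x = x₀p, y = y₀p as reduced products where x₀y₀^{-1} is reduced (i.e., p is the maximal common right piece). Suppose x₀y₀^{-1} = ∏_{i=1}^k tᵢ^{gᵢ} is a reduced product of syllables (tᵢ ∈ V, gᵢ ∈ ℤ\{0}). If x₀'y₀'^{-1} = ∏_{i=1}^k tᵢ^{hᵢ} is another reduced product with the same syllable letters tᵢ and each hᵢ nonzero of the same sign as gᵢ, then for any vertex u: x₀y₀^{-1} ∈ ⟨st(u)⟩ if and only if x₀'y₀'^{-1} ∈ ⟨st(u)⟩. -/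
open scoped commutatorElement

lemma commute_of_adj {α : Type*} {Γ : SimpleGraph α} {a b : α} (h : Γ.Adj a b) :
    Commute (Raag.of Γ a) (Raag.of Γ b) := by
  rw [← commutatorElement_eq_one_iff_commute]
  have : (⁅Raag.of Γ a, Raag.of Γ b⁆ : Raag Γ) =
      QuotientGroup.mk' (Subgroup.normalClosure (raagRels Γ)) ⁅FreeGroup.of a, FreeGroup.of b⁆ := by
    rw [map_commutatorElement]; rfl
  rw [this]
  refine (QuotientGroup.eq_one_iff (N := Subgroup.normalClosure (raagRels Γ)) _).mpr ?_
  exact Subgroup.subset_normalClosure ⟨a, b, h, rfl⟩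

open Classical in
noncomputable def rho {α : Type*} (Γ : SimpleGraph α) (u : α) : Raag Γ →* Raag Γ :=
  PresentedGroup.toGroup (f := fun v => if v ∈ starSet Γ u then Raag.of Γ v else 1) (by
    rintro r ⟨a, b, hadj, rfl⟩
    rw [map_commutatorElement]
    simp only [FreeGroup.lift_apply_of]
    rw [commutatorElement_eq_one_iff_commute]
    split_ifs <;> first
      | exact commute_of_adj hadj
      | exact Commute.one_right _
      | exact Commute.one_left _)

open Classical in
lemma rho_of {α : Type*} (Γ : SimpleGraph α) (u : α) (v : α) :
    rho Γ u (Raag.of Γ v) = if v ∈ starSet Γ u then Raag.of Γ v else 1 :=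
  PresentedGroup.toGroup.of _

lemma rho_fix {α : Type*} (Γ : SimpleGraph α) (u : α) {w : Raag Γ}
    (hw : w ∈ Subgroup.closure (Raag.of Γ '' starSet Γ u)) : rho Γ u w = w := by
  induction hw using Subgroup.closure_induction with
  | mem x hx => obtain ⟨v, hv, rfl⟩ := hx; rw [rho_of, if_pos hv]
  | one => exact map_one _
  | mul x y _ _ hx hy => rw [map_mul, hx, hy]
  | inv x _ hx => rw [map_inv, hx]

def zpowWord {α : Type*} (v : α) (g : ℤ) : List (α × Bool) :=
  List.replicate g.natAbs (v, decide (0 ≤ g))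

lemma wprod_zpowWord {α : Type*} (Γ : SimpleGraph α) (v : α) (g : ℤ) :
    wprod Γ (zpowWord v g) = Raag.of Γ v ^ g := by
  unfold wprod zpowWord
  rw [List.map_replicate, List.prod_replicate]
  by_cases hg : 0 ≤ g
  · simp only [hg, decide_eq_true_eq, if_pos]
    rw [← zpow_natCast, Int.natAbs_of_nonneg hg]
  · rw [if_neg (by simpa using hg)]
    rw [inv_pow, ← zpow_natCast, ← zpow_neg]
    congr 1
    omega

lemma wordLength_le {α : Type*} (Γ : SimpleGraph α) (w : Raag Γ) (l : List (α × Bool))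
    (hl : wprod Γ l = w) : wordLength Γ w ≤ l.length :=
  Nat.sInf_le ⟨l, rfl, hl⟩

lemma wordLength_prod_le {α : Type*} (Γ : SimpleGraph α) {k : ℕ} (t : Fin k → α)
    (e : Fin k → ℤ) :
    wordLength Γ (List.ofFn fun i => (Raag.of Γ (t i)) ^ (e i)).prod ≤
      ∑ i, (e i).natAbs := by
  apply le_trans (wordLength_le Γ _ ((List.ofFn fun i => zpowWord (t i) (e i)).flatten) ?_)
  · rw [List.length_flatten, List.map_ofFn]
    rw [List.sum_ofFn]
    apply le_of_eq
    exact Finset.sum_congr rfl fun i _ => by simp [zpowWord]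
  · unfold wprod
    rw [List.map_flatten, List.prod_flatten, List.map_map, List.map_ofFn]
    exact congrArg List.prod
      (congrArg List.ofFn (funext fun i => wprod_zpowWord Γ (t i) (e i)))

open Classical in
lemma mem_star_closure_iff {α : Type*} (Γ : SimpleGraph α) (u : α) {k : ℕ}
    (t : Fin k → α) (g : Fin k → ℤ) (hg : ∀ i, g i ≠ 0) {w : Raag Γ}
    (hw : w = (List.ofFn fun i => (Raag.of Γ (t i)) ^ (g i)).prod)
    (hwred : wordLength Γ w = ∑ i, (g i).natAbs) :
    w ∈ Subgroup.closure (Raag.of Γ '' starSet Γ u) ↔ ∀ i, t i ∈ starSet Γ u := by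
  constructor
  · intro hmem
    set g' : Fin k → ℤ := fun i => if t i ∈ starSet Γ u then g i else 0 with hg'
    have hfix : rho Γ u w = w := rho_fix Γ u hmem
    have hrho : rho Γ u w = (List.ofFn fun i => (Raag.of Γ (t i)) ^ (g' i)).prod := by
      rw [hw, map_list_prod, List.map_ofFn]
      refine congrArg List.prod (congrArg List.ofFn (funext fun i => ?_))
      simp only [Function.comp_apply, map_zpow, rho_of, hg']
      split_ifs with h
      · rfl
      · rw [one_zpow, zpow_zero]
    have hle : wordLength Γ w ≤ ∑ i, (g' i).natAbs := by
      rw [← hfix, hrho]; exact wordLength_prod_le Γ t g'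
    rw [hwred] at hle
    intro i
    by_contra hi
    have h1 : ∀ j ∈ Finset.univ, (g' j).natAbs ≤ (g j).natAbs := by
      intro j _
      simp only [hg']
      split_ifs with h
      · exact le_refl _
      · simp
    have h2 : ∑ j, (g' j).natAbs < ∑ j, (g j).natAbs := by
      refine Finset.sum_lt_sum h1 ⟨i, Finset.mem_univ i, ?_⟩
      simp only [hg', if_neg hi, Int.natAbs_zero]
      exact Nat.pos_of_ne_zero fun h => hg i (Int.natAbs_eq_zero.mp h)
    omega
  · intro hstar
    rw [hw]
    refine Subgroup.list_prod_mem _ fun x hx => ?_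
    rw [List.mem_ofFn] at hx
    obtain ⟨i, rfl⟩ := hx
    exact zpow_mem (Subgroup.subset_closure (Set.mem_image_of_mem _ (hstar i))) _

/-- with `x = x₀p`, `y = y₀p` reduced products, `x₀y₀⁻¹` reduced, and
`x₀y₀⁻¹ = ∏ tᵢ^{gᵢ}` a reduced product of syllables; if `w' = ∏ tᵢ^{hᵢ}` is another
reduced product with the same syllable letters and each `hᵢ` nonzero of the same sign as
`gᵢ`, then `x₀y₀⁻¹ ∈ ⟨st(u)⟩` iff `w' ∈ ⟨st(u)⟩`. -/
theorem syllable_membership_star {n : ℕ} (Γ : SimpleGraph (Fin n))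
    (x y p x₀ y₀ : Raag Γ)
    (hx : x = x₀ * p) (hy : y = y₀ * p)
    (hxr : wordLength Γ x = wordLength Γ x₀ + wordLength Γ p)
    (hyr : wordLength Γ y = wordLength Γ y₀ + wordLength Γ p)
    (hred : wordLength Γ (x₀ * y₀⁻¹) = wordLength Γ x₀ + wordLength Γ y₀)
    (k : ℕ) (t : Fin k → Fin n) (g h : Fin k → ℤ)
    (hg : ∀ i, g i ≠ 0) (hh : ∀ i, h i ≠ 0)
    (hsign : ∀ i, 0 < g i ↔ 0 < h i)
    (hw : x₀ * y₀⁻¹ = (List.ofFn fun i => (Raag.of Γ (t i)) ^ (g i)).prod)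
    (hwred : wordLength Γ (x₀ * y₀⁻¹) = ∑ i, (g i).natAbs)
    (w' : Raag Γ)
    (hw' : w' = (List.ofFn fun i => (Raag.of Γ (t i)) ^ (h i)).prod)
    (hw'red : wordLength Γ w' = ∑ i, (h i).natAbs)
    (u : Fin n) :
    x₀ * y₀⁻¹ ∈ Subgroup.closure (Raag.of Γ '' starSet Γ u) ↔
      w' ∈ Subgroup.closure (Raag.of Γ '' starSet Γ u) := by
  rw [mem_star_closure_iff Γ u t g hg hw hwred,
      mem_star_closure_iff Γ u t h hh hw' hw'red]
end
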